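/- arXiv:1503.07980 — 8 statements merged into one kernel-verified Lean document; each statement's English description precedes it below -/
import Mathlib

section
/- An m×m complex matrix A is a commutator, i.e., there exist m×m matrices B, C with A = BC - CB, if and only if A has trace zero. -/
open Matrix

lemma zero_diag_commutator {m : ℕ} (A : Matrix (Fin m) (Fin m) ℂ)
    (h : ∀ i, A i i = 0) : ∃ B C : Matrix (Fin m) (Fin m) ℂ, A = B * C - C * B := by
  refine ⟨Matrix.diagonal (fun i => (i : ℂ)), Matrix.of (fun i j => if i = j then 0 else A i j / ((i : ℂ) - j)), ?_⟩
  ext i j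
  simp only [Matrix.sub_apply, Matrix.diagonal_mul, Matrix.mul_diagonal, Matrix.of_apply]
  rcases eq_or_ne i j with rfl | hij
  · simp [h i]
  · have hc : (i : ℂ) ≠ (j : ℂ) := by
      exact_mod_cast fun hh => hij (Fin.ext (by exact_mod_cast hh))
    simp only [if_neg hij]
    rw [div_eq_mul_inv]
    have hs : (i : ℂ) - j ≠ 0 := sub_ne_zero.mpr hc
    field_simp

lemma hard_case {n : ℕ} (A : Matrix (Fin (n+1)) (Fin (n+1)) ℂ) (htr : A.trace = 0)
    (ih : ∀ (D : Matrix (Fin n) (Fin n) ℂ), D.trace = 0 →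
      ∃ P : (Matrix (Fin n) (Fin n) ℂ)ˣ, ∀ i, ((P⁻¹).val * D * P.val) i i = 0)
    (v : Fin (n+1) → ℂ) (hv : LinearIndependent ℂ ![v, A.mulVec v]) :
    ∃ P : (Matrix (Fin (n+1)) (Fin (n+1)) ℂ)ˣ, ∀ i, ((P⁻¹).val * A * P.val) i i = 0 := by
  classical
  set w := A.mulVec v with hw
  have hcard : 2 ≤ n + 1 := by
    have h1 := hv.fintype_card_le_finrank
    simpa using h1
  have hn : 1 < n + 1 := hcard
  set uno : Fin (n+1) := ⟨1, hn⟩ with huno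
  have huno0 : uno ≠ 0 := by simp [huno, Fin.ext_iff]
  have hvw : v ≠ w := by
    intro h
    have := hv.injective (a₁ := 0) (a₂ := 1) (by simp [h])
    simp at this
  have hs : LinearIndepOn ℂ id (Set.range ![v, w]) :=
    (linearIndepOn_id_range_iff hv.injective).mpr hv
  set t := hs.extend (Set.subset_univ _) with ht
  set b := Module.Basis.extend hs with hb
  have hvt : v ∈ t := hs.subset_extend _ ⟨0, rfl⟩
  have hwt : w ∈ t := hs.subset_extend _ ⟨1, rfl⟩
  set e0 : ↥t ≃ Fin (n+1) := b.indexEquiv (Pi.basisFun ℂ (Fin (n+1))) with he0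
  set vv : ↥t := ⟨v, hvt⟩ with hvv
  set ww : ↥t := ⟨w, hwt⟩ with hww
  have hvvww : vv ≠ ww := fun h => hvw (congrArg Subtype.val h)
  set e1 := e0.trans (Equiv.swap (e0 vv) 0) with he1
  set e2 := e1.trans (Equiv.swap (e1 ww) uno) with he2
  have he1v : e1 vv = 0 := by simp [he1]
  have he2w : e2 ww = uno := by simp [he2]
  have he2v : e2 vv = 0 := by
    have h1 : e1 ww ≠ e1 vv := fun h => hvvww (e1.injective h).symm
    rw [he2, Equiv.trans_apply, he1v]
    exact Equiv.swap_apply_of_ne_of_ne (by rw [he1v] at h1; exact h1.symm) (Ne.symm huno0)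
  set c : Module.Basis (Fin (n+1)) ℂ (Fin (n+1) → ℂ) := b.reindex e2 with hc
  have hc0 : c 0 = v := by
    rw [hc, Module.Basis.reindex_apply, ← he2v, Equiv.symm_apply_apply, hb, Module.Basis.extend_apply_self]
  have hc1 : c uno = w := by
    rw [hc, Module.Basis.reindex_apply, ← he2w, Equiv.symm_apply_apply, hb, Module.Basis.extend_apply_self]
  set std := Pi.basisFun ℂ (Fin (n+1)) with hstd
  set f := Matrix.toLin std std A with hf
  set M := LinearMap.toMatrix c c f with hM
  have hM00 : M 0 0 = 0 := by
    have hfc : f (c 0) = c uno := by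
      rw [hc0, hc1, hf, Matrix.toLin_eq_toLin', Matrix.toLin'_apply]
    rw [hM, LinearMap.toMatrix_apply, hfc, Module.Basis.repr_self]
    simp [Finsupp.single_apply, huno0]
  letI : Invertible (std.toMatrix ⇑c) := std.invertibleToMatrix c
  set U : (Matrix (Fin (n+1)) (Fin (n+1)) ℂ)ˣ := unitOfInvertible (std.toMatrix ⇑c) with hUdef
  have hAM : A = U.val * M * (U⁻¹).val := by
    have h1 : (U⁻¹).val = c.toMatrix ⇑std := rfl
    have h2 : U.val = std.toMatrix ⇑c := rfl
    rw [h1, h2, hM, hf, basis_toMatrix_mul_linearMap_toMatrix_mul_basis_toMatrix,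
      LinearMap.toMatrix_toLin]
  have htrM : M.trace = 0 := by
    rw [hAM, Matrix.trace_units_conj] at htr
    exact htr
  -- block decomposition
  set e : Fin (n+1) ≃ (Fin n ⊕ Unit) := (finSuccEquiv n).trans ((Equiv.optionEquivSumPUnit.{0,0} (Fin n) : Option (Fin n) ≃ Fin n ⊕ Unit)) with he
  have heinr : e.symm (Sum.inr ()) = 0 := by simp [he]
  set M' := M.submatrix ⇑e.symm ⇑e.symm with hM'
  set D := M'.toBlocks₁₁ with hD
  have htrM' : M'.trace = M.trace := by
    rw [hM', Matrix.trace, Matrix.trace]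
    exact Fintype.sum_equiv e.symm _ _ (fun z => rfl)
  have hcorner : M' (Sum.inr ()) (Sum.inr ()) = 0 := by
    rw [hM', Matrix.submatrix_apply, heinr]
    exact hM00
  have htrD : D.trace = 0 := by
    have hsplit : M'.trace = D.trace + M' (Sum.inr ()) (Sum.inr ()) := by
      simp only [Matrix.trace, Matrix.diag]
      rw [Fintype.sum_sum_type]
      simp [hD, Matrix.toBlocks₁₁]
    rw [htrM', htrM, hcorner, add_zero] at hsplit
    exact hsplit.symm
  obtain ⟨Q, hQ⟩ := ih D htrD
  set R' := fromBlocks Q.val 0 0 (1 : Matrix Unit Unit ℂ) with hR'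
  set S' := fromBlocks (Q⁻¹).val 0 0 (1 : Matrix Unit Unit ℂ) with hS'
  have hRS : R' * S' = 1 := by
    rw [hR', hS', fromBlocks_multiply]
    simp only [Matrix.mul_zero, Matrix.zero_mul, add_zero, zero_add, Matrix.mul_one,
      Matrix.one_mul, ← Units.val_mul, mul_inv_cancel, Units.val_one]
    exact fromBlocks_one
  have hSR : S' * R' = 1 := by
    rw [hR', hS', fromBlocks_multiply]
    simp only [Matrix.mul_zero, Matrix.zero_mul, add_zero, zero_add, Matrix.mul_one,
      Matrix.one_mul, ← Units.val_mul, inv_mul_cancel, Units.val_one]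
    exact fromBlocks_one
  set V : (Matrix (Fin (n+1)) (Fin (n+1)) ℂ)ˣ :=
    ⟨R'.submatrix ⇑e ⇑e, S'.submatrix ⇑e ⇑e,
      by rw [Matrix.submatrix_mul_equiv, hRS, Matrix.submatrix_one_equiv],
      by rw [Matrix.submatrix_mul_equiv, hSR, Matrix.submatrix_one_equiv]⟩ with hV
  refine ⟨U * V, fun i => ?_⟩
  have hconj : ((U*V)⁻¹).val * A * (U*V).val = (V⁻¹).val * M * V.val := by
    rw [hAM]
    simp only [_root_.mul_inv_rev, Units.val_mul, mul_assoc, Units.inv_mul_cancel_left]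
  have hMsub : M = M'.submatrix ⇑e ⇑e := by
    rw [hM', Matrix.submatrix_submatrix]
    simp
  have hfin : (V⁻¹).val * M * V.val = (S' * M' * R').submatrix ⇑e ⇑e := by
    have hvinv : (V⁻¹).val = S'.submatrix ⇑e ⇑e := rfl
    have hvval : V.val = R'.submatrix ⇑e ⇑e := rfl
    rw [hvinv, hvval, hMsub, Matrix.submatrix_mul_equiv, Matrix.submatrix_mul_equiv]
  rw [hconj, hfin]
  have key : ∀ z, (S' * M' * R') z z = 0 := by
    intro z
    have hM'b : M' = fromBlocks D M'.toBlocks₁₂ M'.toBlocks₂₁ M'.toBlocks₂₂ := by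
      rw [hD]; exact (fromBlocks_toBlocks M').symm
    rw [hM'b, hR', hS', fromBlocks_multiply, fromBlocks_multiply]
    rcases z with i | u
    · simpa using hQ i
    · simpa [Matrix.toBlocks₂₂] using hcorner
  exact key (e i)



lemma dep_pair {m : ℕ} {x y : Fin m → ℂ} (hx : x ≠ 0) (h : ¬ LinearIndependent ℂ ![x, y]) :
    ∃ a : ℂ, a • x = y := by
  rw [LinearIndependent.pair_iff' hx] at h
  push_neg at h
  exact h

lemma similar_zero_diag : ∀ (m : ℕ) (A : Matrix (Fin m) (Fin m) ℂ), A.trace = 0 →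
    ∃ P : (Matrix (Fin m) (Fin m) ℂ)ˣ, ∀ i, ((P⁻¹).val * A * P.val) i i = 0 := by
  intro m
  induction m with
  | zero => exact fun A _ => ⟨1, fun i => i.elim0⟩
  | succ n ih =>
    intro A htr
    by_cases hsc : ∃ v : Fin (n+1) → ℂ, LinearIndependent ℂ ![v, A.mulVec v]
    · obtain ⟨v, hv⟩ := hsc
      exact hard_case A htr ih v hv
    · -- scalar case: diagonal entries all equal, hence zero
      push_neg at hsc
      have hmv : ∀ l i : Fin (n+1), A.mulVec (Pi.single l 1) i = A i l := by
        intro l i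
        rw [Matrix.mulVec_single]
        simp
      have hoff : ∀ i j : Fin (n+1), i ≠ j → A i j = 0 := by
        intro i j hij
        obtain ⟨a, ha⟩ := dep_pair (x := (Pi.single j 1 : Fin (n+1) → ℂ))
          (y := A.mulVec (Pi.single j 1)) (fun h0 => by
            have := congrFun h0 j
            simp [Pi.single_apply] at this) (hsc _)
        have := congrFun ha i
        simp [hmv, Pi.single_apply, hij] at this
        exact this.symm
      have hdiag : ∀ j k : Fin (n+1), A j j = A k k := by
        intro j k
        rcases eq_or_ne j k with rfl | hjk
        · rfl
        · obtain ⟨a, ha⟩ := dep_pair (x := (Pi.single j 1 + Pi.single k 1 : Fin (n+1) → ℂ))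
            (y := A.mulVec (Pi.single j 1 + Pi.single k 1)) (fun h0 => by
              have := congrFun h0 j
              simp [Pi.single_apply, hjk] at this) (hsc _)
          have hj := congrFun ha j
          have hk := congrFun ha k
          rw [Matrix.mulVec_add] at hj hk
          simp only [Pi.add_apply, Pi.smul_apply, Pi.single_apply, hmv, smul_eq_mul,
            if_pos rfl, if_neg hjk, if_neg hjk.symm, hoff j k hjk, hoff k j hjk.symm] at hj hk
          simp only [if_pos trivial, add_zero, zero_add, mul_one] at hj hk
          rw [← hj, ← hk]
      have h0 : A 0 0 = 0 := by
        have ht2 : A.trace = (n+1 : ℕ) • A 0 0 := by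
          rw [Matrix.trace, Finset.sum_congr rfl (fun i _ => show A.diag i = A 0 0 from hdiag i 0)]
          simp
        rw [ht2] at htr
        have : ((n:ℂ)+1) ≠ 0 := Nat.cast_add_one_ne_zero n
        rcases (by simpa using htr : ((n:ℂ)+1) = 0 ∨ A 0 0 = 0) with h | h
        · exact absurd h this
        · exact h
      exact ⟨1, fun i => by simpa using hdiag i 0 ▸ h0⟩

/-- An m×m complex matrix is a commutator iff it has trace zero. -/
theorem stmt1 {m : ℕ} (A : Matrix (Fin m) (Fin m) ℂ) :
    (∃ B C : Matrix (Fin m) (Fin m) ℂ, A = B * C - C * B) ↔ A.trace = 0 := by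
  constructor
  · rintro ⟨B, C, rfl⟩
    rw [Matrix.trace_sub, Matrix.trace_mul_comm, sub_self]
  · intro htr
    obtain ⟨P, hP⟩ := similar_zero_diag m A htr
    obtain ⟨B, C, hBC⟩ := zero_diag_commutator ((P⁻¹).val * A * P.val) hP
    refine ⟨P.val * B * (P⁻¹).val, P.val * C * (P⁻¹).val, ?_⟩
    have hA : A = P.val * ((P⁻¹).val * A * P.val) * (P⁻¹).val := by
      simp only [mul_assoc, Units.mul_inv_cancel_left, Units.mul_inv, mul_one]
    rw [hA, hBC]
    simp only [Matrix.mul_sub, Matrix.sub_mul, mul_assoc, Units.inv_mul_cancel_left]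
end

section
/- Every m×m complex matrix with zero trace is unitarily equivalent to a matrix all of whose diagonal entries are zero; that is, if tr(A) = 0 then there exists a unitary U such that U*AU has zero diagonal. -/
open Matrix Complex

local notation "conjC" => starRingEnd ℂ

private lemma qexpand {m : ℕ} (M : Matrix (Fin m) (Fin m) ℂ) (a b : ℂ) (u v : Fin m → ℂ) :
    star (a • u + b • v) ⬝ᵥ M.mulVec (a • u + b • v)
      = conjC a * a * (star u ⬝ᵥ M.mulVec u) + conjC a * b * (star u ⬝ᵥ M.mulVec v)
        + conjC b * a * (star v ⬝ᵥ M.mulVec u) + conjC b * b * (star v ⬝ᵥ M.mulVec v) := by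
  simp [star_add, star_smul, Matrix.mulVec_add, Matrix.mulVec_smul, add_dotProduct,
    dotProduct_add, smul_dotProduct, dotProduct_smul, smul_eq_mul]
  ring

private lemma qsmul {m : ℕ} (M : Matrix (Fin m) (Fin m) ℂ) (a : ℂ) (u : Fin m → ℂ) :
    star (a • u) ⬝ᵥ M.mulVec (a • u) = conjC a * a * (star u ⬝ᵥ M.mulVec u) := by
  simp [star_smul, Matrix.mulVec_smul, smul_dotProduct, dotProduct_smul, smul_eq_mul]
  ring

private lemma nsmul' {m : ℕ} (a : ℂ) (u : Fin m → ℂ) :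
    star (a • u) ⬝ᵥ (a • u) = conjC a * a * (star u ⬝ᵥ u) := by
  simp [star_smul, smul_dotProduct, dotProduct_smul, smul_eq_mul]
  ring

private lemma seg {m : ℕ} (A : Matrix (Fin m) (Fin m) ℂ) {u v : Fin m → ℂ}
    (hu : star u ⬝ᵥ u = 1) (hv : star v ⬝ᵥ v = 1) {t : ℝ} (ht0 : 0 ≤ t) (ht1 : t ≤ 1) :
    ∃ x : Fin m → ℂ, star x ⬝ᵥ x = 1 ∧
      star x ⬝ᵥ A.mulVec x
        = (1 - (t : ℂ)) * (star u ⬝ᵥ A.mulVec u) + (t : ℂ) * (star v ⬝ᵥ A.mulVec v) := by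
  set α := star u ⬝ᵥ A.mulVec u with hα
  set β := star v ⬝ᵥ A.mulVec v with hβ
  by_cases hab : α = β
  · exact ⟨u, hu, by rw [← hα, hab]; ring⟩
  set γ : ℂ := (1 - (t : ℂ)) * α + (t : ℂ) * β with hγ
  set δ : ℂ := β - α with hδdef
  have hδ : δ ≠ 0 := sub_ne_zero.2 (Ne.symm hab)
  set C : Matrix (Fin m) (Fin m) ℂ := δ⁻¹ • (A - γ • 1) with hC
  have key : ∀ y w : Fin m → ℂ, star y ⬝ᵥ C.mulVec w
      = δ⁻¹ * (star y ⬝ᵥ A.mulVec w - γ * (star y ⬝ᵥ w)) := by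
    intro y w
    simp only [hC, Matrix.smul_mulVec, Matrix.sub_mulVec, Matrix.smul_mulVec,
      Matrix.one_mulVec, dotProduct_smul, dotProduct_sub, smul_eq_mul]
    try ring
  have hqu : star u ⬝ᵥ C.mulVec u = -(t : ℂ) := by
    rw [key, hu, mul_one]
    have h1 : α - γ = -(t : ℂ) * δ := by rw [hγ, hδdef]; ring
    rw [h1]
    field_simp
  have hqv : star v ⬝ᵥ C.mulVec v = 1 - (t : ℂ) := by
    rw [key, hv, mul_one]
    have h1 : β - γ = (1 - (t : ℂ)) * δ := by rw [hγ, hδdef]; ring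
    rw [h1]
    field_simp
  set c := star u ⬝ᵥ C.mulVec v with hc
  set d := star v ⬝ᵥ C.mulVec u with hd
  obtain ⟨z, hz1, κ, hκ⟩ : ∃ z : ℂ, conjC z * z = 1 ∧ ∃ κ : ℝ, z * c + conjC z * d = (κ : ℂ) := by
    by_cases hcd : c = conjC d
    · refine ⟨1, by simp, 2 * d.re, ?_⟩
      rw [hcd]
      simp [Complex.ext_iff]
      ring
    · set w := c - conjC d with hw
      have hw0 : w ≠ 0 := sub_ne_zero.2 hcd
      have habs : (‖w‖ : ℝ) ≠ 0 := norm_ne_zero_iff.mpr hw0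
      refine ⟨conjC w / ((‖w‖ : ℝ) : ℂ), ?_, (Complex.normSq c - Complex.normSq d) / ‖w‖, ?_⟩
      · have : conjC (conjC w / ((‖w‖ : ℝ) : ℂ)) = w / ((‖w‖ : ℝ) : ℂ) := by
          simp [map_div₀, Complex.conj_conj, Complex.conj_ofReal]
        rw [this]
        rw [div_mul_div_comm]
        rw [mul_comm w (conjC w)]
        rw [show conjC w * w = (Complex.normSq w : ℂ) by
          rw [mul_comm]; exact Complex.mul_conj w]
        rw [show (((‖w‖ : ℝ) : ℂ) * ((‖w‖ : ℝ) : ℂ)) = (Complex.normSq w : ℂ) by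
          push_cast [← Complex.sq_norm]; ring]
        apply div_self
        simpa [Complex.normSq_eq_zero] using hw0
      · have hwcd : conjC w * c + w * d = (Complex.normSq c : ℂ) - (Complex.normSq d : ℂ) := by
          rw [show (Complex.normSq c : ℂ) = c * conjC c from (Complex.mul_conj c).symm,
            show (Complex.normSq d : ℂ) = d * conjC d from (Complex.mul_conj d).symm]
          simp only [hw, map_sub, Complex.conj_conj]
          ring
        have hcz : conjC (conjC w / ((‖w‖ : ℝ) : ℂ)) = w / ((‖w‖ : ℝ) : ℂ) := by
          simp [map_div₀, Complex.conj_conj, Complex.conj_ofReal]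
        rw [hcz]
        rw [div_mul_eq_mul_div, div_mul_eq_mul_div, ← add_div, hwcd]
        push_cast
        ring
  have hz0 : z ≠ 0 := by
    intro h
    rw [h] at hz1
    simp at hz1
  set N : ℝ → ℝ := fun s => -t * (1 - s) ^ 2 + (1 - t) * s ^ 2 + s * (1 - s) * κ with hNdef
  have hcont : ContinuousOn N (Set.Icc 0 1) := by
    apply Continuous.continuousOn
    fun_prop
  have hmem : (0 : ℝ) ∈ Set.Icc (N 0) (N 1) := by
    constructor
    · simp [hNdef]; linarith
    · simp [hNdef]; linarith
  obtain ⟨s, hs, hNs⟩ := intermediate_value_Icc (by norm_num : (0:ℝ) ≤ 1) hcont hmem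
  set a : ℂ := ((1 - s : ℝ) : ℂ) with ha
  set b : ℂ := (s : ℂ) * z with hb
  set y := a • u + b • v with hy
  have hNsC : -(t:ℂ) * (1 - (s:ℂ)) ^ 2 + (1 - (t:ℂ)) * (s:ℂ) ^ 2 + (s:ℂ) * (1 - (s:ℂ)) * (κ:ℂ) = 0 := by
    have := congrArg (fun r : ℝ => (r : ℂ)) hNs
    push_cast [hNdef] at this
    convert this using 1
  have hca : conjC a = a := by rw [ha]; exact Complex.conj_ofReal _
  have hcb : conjC b = (s : ℂ) * conjC z := by rw [hb, _root_.map_mul, Complex.conj_ofReal]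
  have hyC : star y ⬝ᵥ C.mulVec y = 0 := by
    rw [hy, qexpand C a b u v, hqu, hqv, ← hc, ← hd, hca, hcb, ha, hb]
    push_cast
    linear_combination hNsC + ((s:ℂ) * (1 - (s:ℂ))) * hκ + ((s:ℂ)^2 * (1 - (t:ℂ))) * hz1
  have hy0 : y ≠ 0 := by
    intro h0
    have hav : a • u = (-b) • v := by
      rw [neg_smul]
      exact eq_neg_of_add_eq_zero_left (hy ▸ h0)
    have e1 : conjC a * a = conjC b * b := by
      have h1 := nsmul' a u
      rw [hav, nsmul' (-b) v, hv, map_neg] at h1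
      rw [hu, mul_one] at h1
      linear_combination -h1
    have e2 : conjC a * a * (-(t:ℂ)) = conjC b * b * (1 - (t:ℂ)) := by
      have h1 := qsmul C a u
      rw [hav, qsmul C (-b) v, hqv, map_neg] at h1
      rw [hqu] at h1
      linear_combination -h1
    have hbb : conjC b * b = 0 := by
      rw [e1] at e2
      linear_combination -e2
    have hb0 : b = 0 := by
      rcases mul_eq_zero.mp hbb with h | h
      · simpa using congrArg (starRingEnd ℂ) h
      · exact h
    have ha0 : a = 0 := by
      have h2 : conjC a * a = 0 := by rw [e1, hbb]
      rcases mul_eq_zero.mp h2 with h | h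
      · simpa using congrArg (starRingEnd ℂ) h
      · exact h
    have hs1 : (1 - s : ℝ) = 0 := by rw [ha] at ha0; exact_mod_cast ha0
    have hb0' : (s : ℂ) * z = 0 := hb ▸ hb0
    have : s = 1 := by linarith
    rw [this] at hb0'
    simp [hz0] at hb0'
  set r : ℝ := ∑ i, Complex.normSq (y i) with hr
  have hνr : star y ⬝ᵥ y = (r : ℂ) := by
    rw [hr]
    push_cast
    simp [dotProduct, Complex.normSq_eq_conj_mul_self]
  have hrpos : 0 < r := by
    rcases Function.ne_iff.mp hy0 with ⟨i, hi⟩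
    have h1 : 0 < Complex.normSq (y i) := Complex.normSq_pos.mpr hi
    have h2 : Complex.normSq (y i) ≤ r :=
      Finset.single_le_sum (fun j _ => Complex.normSq_nonneg (y j)) (Finset.mem_univ i)
    linarith
  have hsq : Real.sqrt r ≠ 0 := by
    positivity
  set e : ℂ := ((Real.sqrt r : ℂ))⁻¹ with he
  have hce : conjC e = e := by
    rw [he, map_inv₀, Complex.conj_ofReal]
  have hee : e * e * (r : ℂ) = 1 := by
    rw [he, ← Complex.ofReal_inv, ← Complex.ofReal_mul, ← Complex.ofReal_mul,
      ← Complex.ofReal_one]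
    congr 1
    rw [← mul_inv]
    rw [Real.mul_self_sqrt hrpos.le]
    field_simp
  have hunit : star (e • y) ⬝ᵥ (e • y) = 1 := by
    rw [nsmul' e y, hνr, hce, hee]
  have hqC : star (e • y) ⬝ᵥ C.mulVec (e • y) = 0 := by
    rw [qsmul C e y, hyC, mul_zero]
  have hqA : star (e • y) ⬝ᵥ A.mulVec (e • y) = γ := by
    have hk := key (e • y) (e • y)
    rw [hqC, hunit, mul_one] at hk
    have hz' := (mul_eq_zero.mp hk.symm).resolve_left (inv_ne_zero hδ)
    linear_combination hz'
  exact ⟨e • y, hunit, by rw [hqA, hγ]⟩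

private lemma avg {m : ℕ} (A : Matrix (Fin m) (Fin m) ℂ) :
    ∀ (n : ℕ) (u : Fin (n + 1) → Fin m → ℂ), (∀ i, star (u i) ⬝ᵥ u i = 1) →
      ∃ x : Fin m → ℂ, star x ⬝ᵥ x = 1 ∧
        ((n : ℂ) + 1) * (star x ⬝ᵥ A.mulVec x) = ∑ i, star (u i) ⬝ᵥ A.mulVec (u i) := by
  intro n
  induction n with
  | zero =>
    intro u hu
    exact ⟨u 0, hu 0, by simp⟩
  | succ n ih =>
    intro u hu
    obtain ⟨y, hy1, hyq⟩ := ih (fun i => u i.castSucc) (fun i => hu i.castSucc)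
    have ht0 : (0:ℝ) ≤ 1 / (n + 2) := by positivity
    have ht1 : (1 / (n + 2) : ℝ) ≤ 1 := by
      rw [div_le_one (by positivity)]
      · linarith [Nat.cast_nonneg (α := ℝ) n]
    obtain ⟨x, hx1, hxq⟩ := seg A hy1 (hu (Fin.last _)) ht0 ht1
    refine ⟨x, hx1, ?_⟩
    rw [Fin.sum_univ_castSucc]
    rw [hxq, ← hyq]
    have hc : ((1 / (n + 2) : ℝ) : ℂ) = 1 / ((n : ℂ) + 2) := by push_cast; ring
    rw [hc]
    have h2 : ((n : ℂ) + 2) ≠ 0 := by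
      intro h
      have : ((n : ℂ) + 2).re = 0 := by rw [h]; simp
      simp [Complex.add_re] at this
      linarith [Nat.cast_nonneg (α := ℝ) n]
    field_simp
    push_cast
    ring

private lemma exists_unit_zero {m : ℕ} (hm : 0 < m) (A : Matrix (Fin m) (Fin m) ℂ)
    (hA : A.trace = 0) :
    ∃ x : Fin m → ℂ, star x ⬝ᵥ x = 1 ∧ star x ⬝ᵥ A.mulVec x = 0 := by
  obtain ⟨n, rfl⟩ : ∃ n, m = n + 1 := ⟨m - 1, (Nat.succ_pred_eq_of_pos hm).symm⟩
  set e : Fin (n+1) → Fin (n+1) → ℂ := fun i j => if j = i then 1 else 0 with he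
  have hstar : ∀ i, star (e i) = e i := by
    intro i
    funext j
    simp [he, apply_ite (star : ℂ → ℂ)]
  have he1 : ∀ i, star (e i) ⬝ᵥ e i = 1 := by
    intro i
    rw [hstar]
    simp [he, dotProduct, ite_mul, Finset.sum_ite_eq']
  have heq : ∀ i, star (e i) ⬝ᵥ A.mulVec (e i) = A i i := by
    intro i
    rw [hstar]
    simp [he, dotProduct, Matrix.mulVec, ite_mul, mul_ite, Finset.sum_ite_eq']
  obtain ⟨x, hx1, hxq⟩ := avg A n e he1
  refine ⟨x, hx1, ?_⟩
  have hsum : ∑ i, star (e i) ⬝ᵥ A.mulVec (e i) = 0 := by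
    rw [← hA, Matrix.trace]
    simp only [heq]
    rfl
  rw [hsum] at hxq
  have h2 : ((n : ℂ) + 1) ≠ 0 := by
    intro h
    have : ((n : ℂ) + 1).re = 0 := by rw [h]; simp
    simp [Complex.add_re] at this
    linarith [Nat.cast_nonneg (α := ℝ) n]
  exact (mul_eq_zero.mp hxq).resolve_left h2

private lemma exists_unitary_col {n : ℕ} (x : Fin (n + 1) → ℂ) (hx : star x ⬝ᵥ x = 1) :
    ∃ U ∈ Matrix.unitaryGroup (Fin (n + 1)) ℂ, ∀ j, U j 0 = x j := by
  set x' : EuclideanSpace ℂ (Fin (n + 1)) := (WithLp.equiv 2 _).symm x with hx'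
  have hinner : ∀ y z : EuclideanSpace ℂ (Fin (n + 1)),
      (inner ℂ y z : ℂ) = ∑ i, conjC (y i) * z i := by
    intro y z
    rw [PiLp.inner_apply (𝕜 := ℂ)]
    refine Finset.sum_congr rfl fun i _ => ?_
    rw [RCLike.inner_apply]
    ring
  have hxx : (inner ℂ x' x' : ℂ) = 1 := by
    rw [hinner]
    rw [← hx]
    rfl
  have hnorm : ‖x'‖ = 1 := by
    have h := norm_sq_eq_re_inner (𝕜 := ℂ) x'
    rw [hxx] at h
    simp at h
    rcases h with h | h
    · exact h
    · nlinarith [norm_nonneg x']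
  have hON : Orthonormal ℂ (Set.restrict {(0 : Fin (n+1))} (fun _ : Fin (n+1) => x')) := by
    rw [orthonormal_iff_ite]
    intro i j
    have : i = j := Subtype.ext (by rw [i.2, j.2])
    subst this
    simp [hxx]
    exact Or.inl hnorm
  have hcard : Module.finrank ℂ (EuclideanSpace ℂ (Fin (n+1))) = Fintype.card (Fin (n+1)) := by
    simp [finrank_euclideanSpace]
  obtain ⟨b, hb⟩ := hON.exists_orthonormalBasis_extension_of_card_eq hcard
  have hb0 : b 0 = x' := hb 0 rfl
  refine ⟨Matrix.of fun j i => b i j, ?_, ?_⟩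
  · rw [Matrix.mem_unitaryGroup_iff']
    ext i j
    have horth := orthonormal_iff_ite.mp b.orthonormal i j
    rw [hinner] at horth
    simp only [Matrix.mul_apply, Matrix.star_apply, Matrix.of_apply, Matrix.one_apply]
    rw [← horth]
    rfl
  · intro j
    simp only [Matrix.of_apply]
    rw [hb0]
    rfl

private lemma main : ∀ (m : ℕ) (A : Matrix (Fin m) (Fin m) ℂ), A.trace = 0 →
    ∃ U ∈ Matrix.unitaryGroup (Fin m) ℂ, ∀ i, (star U * A * U) i i = 0 := by
  intro m
  induction m with
  | zero =>
    intro A _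
    exact ⟨1, one_mem _, fun i => i.elim0⟩
  | succ n ih =>
    intro A hA
    obtain ⟨x, hx1, hxq⟩ := exists_unit_zero (Nat.succ_pos n) A hA
    obtain ⟨U1, hU1, hU1col⟩ := exists_unitary_col x hx1
    set B : Matrix (Fin (n+1)) (Fin (n+1)) ℂ := star U1 * A * U1 with hB
    have hB00 : B 0 0 = 0 := by
      rw [hB, ← hxq]
      simp only [Matrix.mul_apply, Matrix.star_apply, dotProduct, Matrix.mulVec,
        Pi.star_apply]
      simp only [Finset.sum_mul, Finset.mul_sum]
      rw [Finset.sum_comm]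
      apply Finset.sum_congr rfl
      intro k _
      apply Finset.sum_congr rfl
      intro l _
      rw [hU1col, hU1col]
      ring
    have hBtr : B.trace = 0 := by
      rw [hB, Matrix.trace_mul_comm (star U1 * A) U1, ← Matrix.mul_assoc,
        Matrix.mem_unitaryGroup_iff.mp hU1, Matrix.one_mul, hA]
    set A' : Matrix (Fin n) (Fin n) ℂ := Matrix.of fun i j => B i.succ j.succ with hA'
    have hA'tr : A'.trace = 0 := by
      have h := hBtr
      simp only [Matrix.trace, Matrix.diag, Fin.sum_univ_succ, hB00, zero_add] at h
      simp only [Matrix.trace, Matrix.diag, hA', Matrix.of_apply]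
      exact h
    obtain ⟨V', hV', hV'd⟩ := ih A' hA'tr
    set V : Matrix (Fin (n+1)) (Fin (n+1)) ℂ :=
      Matrix.of fun i j =>
        Fin.cases (Fin.cases (1:ℂ) (fun _ => 0) j) (fun i' => Fin.cases 0 (fun j' => V' i' j') j) i
      with hV
    have hV00 : V 0 0 = 1 := rfl
    have hV0s : ∀ j : Fin n, V 0 j.succ = 0 := fun j => rfl
    have hVs0 : ∀ i : Fin n, V i.succ 0 = 0 := fun i => rfl
    have hVss : ∀ i j : Fin n, V i.succ j.succ = V' i j := fun i j => rfl
    have hVmem : V ∈ Matrix.unitaryGroup (Fin (n+1)) ℂ := by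
      rw [Matrix.mem_unitaryGroup_iff']
      have hV'u := Matrix.mem_unitaryGroup_iff'.mp hV'
      ext i j
      simp only [Matrix.mul_apply, Matrix.star_apply]
      rw [Fin.sum_univ_succ]
      refine Fin.cases ?_ (fun i' => ?_) i <;> refine Fin.cases ?_ (fun j' => ?_) j
      · simp [hV00, hVs0]
      · simp [hV00, hV0s, hVs0, Matrix.one_apply, (Fin.succ_ne_zero _).symm]
      · simp [hV00, hV0s, hVs0, Matrix.one_apply, Fin.succ_ne_zero]
      · have := congrFun (congrFun hV'u i') j'
        simp only [Matrix.mul_apply, Matrix.star_apply] at this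
        simp only [hV0s, hVss, map_zero, zero_mul, zero_add]
        rw [this]
        simp [Matrix.one_apply, Fin.succ_inj]
    refine ⟨U1 * V, mul_mem hU1 hVmem, ?_⟩
    have hconj : star (U1 * V) * A * (U1 * V) = star V * B * V := by
      rw [StarMul.star_mul, hB]
      noncomm_ring
    rw [hconj]
    intro i
    have hentry : ∀ k : Fin (n+1), (star V * B * V) k k
        = ∑ p, ∑ q, star (V p k) * B p q * V q k := by
      intro k
      simp only [Matrix.mul_apply, Matrix.star_apply, Finset.sum_mul]
      rw [Finset.sum_comm]
    rw [hentry]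
    refine Fin.cases ?_ (fun i' => ?_) i
    · rw [Fin.sum_univ_succ]
      have h1 : ∑ q, star (V 0 0) * B 0 q * V q 0 = B 0 0 := by
        rw [Fin.sum_univ_succ, hV00]
        simp [hVs0]
      rw [h1, hB00]
      have h2 : ∀ p : Fin n, ∑ q, star (V p.succ 0) * B p.succ q * V q 0 = 0 := by
        intro p
        apply Finset.sum_eq_zero
        intro q _
        rw [hVs0]
        simp
      rw [zero_add]
      exact Finset.sum_eq_zero fun p _ => h2 p
    · have h3 := hV'd i'
      have hentry' : (star V' * A' * V') i' i' = ∑ p, ∑ q, star (V' p i') * A' p q * V' q i' := by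
        simp only [Matrix.mul_apply, Matrix.star_apply, Finset.sum_mul]
        rw [Finset.sum_comm]
      rw [hentry'] at h3
      rw [← h3]
      rw [Fin.sum_univ_succ]
      have h4 : ∑ q, star (V 0 i'.succ) * B 0 q * V q i'.succ = 0 := by
        apply Finset.sum_eq_zero
        intro q _
        rw [hV0s]
        simp
      rw [h4, zero_add]
      apply Finset.sum_congr rfl
      intro p _
      rw [Fin.sum_univ_succ, hV0s]
      simp only [mul_zero, zero_mul, star_zero, zero_add, hVss]
      apply Finset.sum_congr rfl
      intro q _
      rfl

/-- Every zero-trace complex matrix is unitarily equivalent to a matrix with zero diagonal. -/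
theorem stmt2 {m : ℕ} (A : Matrix (Fin m) (Fin m) ℂ) (hA : A.trace = 0) :
    ∃ U : Matrix.unitaryGroup (Fin m) ℂ,
      ∀ i, ((star U : Matrix (Fin m) (Fin m) ℂ) * A * (U : Matrix (Fin m) (Fin m) ℂ)) i i = 0 := by
  obtain ⟨U, hU, h⟩ := main m A hA
  exact ⟨⟨U, hU⟩, h⟩
end

section
/- Let G ⊂ ℤ + ℤi be a set of m Gaussian integers with the m smallest absolute values (ties broken arbitrarily). Then every z ∈ G satisfies |z| ≤ 1 + √(m/π). -/
open MeasureTheory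

/-- A Gaussian integer. -/
def IsGaussianInt (z : ℂ) : Prop := ∃ a b : ℤ, z = (a : ℂ) + (b : ℂ) * Complex.I

/-- If `G` consists of `m` Gaussian integers with the `m` smallest absolute values, then
every `z ∈ G` has `|z| ≤ 1 + √(m/π)`. -/
theorem stmt5 {m : ℕ} (G : Finset ℂ) (hGcard : G.card = m)
    (hGauss : ∀ z ∈ G, IsGaussianInt z)
    (hmin : ∀ z : ℂ, IsGaussianInt z → z ∉ G → ∀ w ∈ G, ‖w‖ ≤ ‖z‖) :
    ∀ z ∈ G, ‖z‖ ≤ 1 + Real.sqrt (m / Real.pi) := by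
  intro z hz
  by_contra hlt
  push_neg at hlt
  set R := ‖z‖ with hR
  have hπ : (0:ℝ) < Real.pi := Real.pi_pos
  have hsq : Real.sqrt ((m:ℝ) / Real.pi) ^ 2 = (m:ℝ) / Real.pi :=
    Real.sq_sqrt (by positivity)
  have hsnn : 0 ≤ Real.sqrt ((m:ℝ) / Real.pi) := Real.sqrt_nonneg _
  -- every Gaussian integer of absolute value < R lies in G
  have hmem : ∀ w : ℂ, IsGaussianInt w → ‖w‖ < R → w ∈ G := by
    intro w hw hwR
    by_contra hwn
    exact absurd (hmin w hw hwn z hz) (not_le.mpr hwR)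
  -- unit squares centered at Gaussian integers
  set S : ℂ → Set ℂ := fun w => Complex.measurableEquivRealProd ⁻¹'
      (Set.Icc (w.re - 1/2) (w.re + 1/2) ×ˢ Set.Icc (w.im - 1/2) (w.im + 1/2)) with hS
  have hcover : Metric.ball (0:ℂ) (R - 1) ⊆ ⋃ w ∈ G, S w := by
    intro x hx
    simp only [Metric.mem_ball, dist_zero_right] at hx
    set w : ℂ := ((round x.re : ℤ) : ℂ) + ((round x.im : ℤ) : ℂ) * Complex.I with hw
    have hwre : w.re = ((round x.re : ℤ) : ℝ) := by simp [hw]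
    have hwim : w.im = ((round x.im : ℤ) : ℝ) := by simp [hw]
    have h1 : |x.re - w.re| ≤ 1/2 := by rw [hwre]; exact abs_sub_round x.re
    have h2 : |x.im - w.im| ≤ 1/2 := by rw [hwim]; exact abs_sub_round x.im
    have hwG : w ∈ G := by
      refine hmem w ⟨round x.re, round x.im, rfl⟩ ?_
      have habs : ‖w - x‖ ≤ 1 := by
        refine le_trans (Complex.norm_le_abs_re_add_abs_im _) ?_
        simp only [Complex.sub_re, Complex.sub_im]
        rw [abs_sub_comm w.re x.re, abs_sub_comm w.im x.im]
        linarith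
      calc ‖w‖ ≤ ‖x‖ + ‖w - x‖ := by
            have := norm_add_le x (w - x); simpa using this
        _ ≤ ‖x‖ + 1 := by linarith
        _ < R := by linarith
    refine Set.mem_biUnion hwG ?_
    simp only [hS, Set.mem_preimage, Complex.measurableEquivRealProd_apply,
      Set.mem_prod, Set.mem_Icc]
    rw [abs_le] at h1 h2
    constructor <;> constructor <;> linarith [h1.1, h1.2, h2.1, h2.2]
  have hvol : volume (Metric.ball (0:ℂ) (R-1)) ≤ (m : ENNReal) := by
    calc volume (Metric.ball (0:ℂ) (R-1)) ≤ volume (⋃ w ∈ G, S w) := measure_mono hcover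
      _ ≤ ∑ w ∈ G, volume (S w) := measure_biUnion_finset_le G S
      _ = ∑ w ∈ G, 1 := by
          refine Finset.sum_congr rfl fun w _ => ?_
          rw [hS]
          rw [Complex.volume_preserving_equiv_real_prod.measure_preimage
            ((measurableSet_Icc.prod measurableSet_Icc).nullMeasurableSet)]
          rw [Measure.volume_eq_prod, Measure.prod_prod, Real.volume_Icc, Real.volume_Icc]
          norm_num
      _ = m := by simp [hGcard]
  rw [Complex.volume_ball] at hvol
  have hRpos : 0 ≤ R - 1 := by linarith
  have hvol' : (R - 1)^2 * Real.pi ≤ (m : ℝ) := by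
    rw [← ENNReal.ofReal_pow hRpos, ← ENNReal.ofReal_coe_nnreal, ← ENNReal.ofReal_mul (by positivity),
      NNReal.coe_real_pi, ← ENNReal.ofReal_natCast m] at hvol
    exact (ENNReal.ofReal_le_ofReal_iff (by positivity)).mp hvol
  have hkey : Real.sqrt ((m:ℝ) / Real.pi) ^ 2 * Real.pi = (m : ℝ) := by
    rw [hsq]; field_simp
  have hgt : Real.sqrt ((m:ℝ) / Real.pi) < R - 1 := by linarith
  have h2 : Real.sqrt ((m:ℝ) / Real.pi) ^ 2 < (R - 1) ^ 2 := by nlinarith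
  linarith [mul_lt_mul_of_pos_right h2 hπ]
end

section
/- There exists an absolute constant a such that for every m ≥ 2, every set G of m distinct Gaussian integers each of absolute value at most 1 + √(m/π), and every b ∈ G: (1/(m-1)) ∑_{w ∈ G, w ≠ b} 1/|b - w|² ≤ (a + π log m)/m. -/
open Real Finset

lemma term_le (p : ℝ) (hp : 1 ≤ p) (q : ℕ) :
    1 / (p ^ 2 + ((q : ℝ) + 1) ^ 2) ≤ (arctan (((q : ℝ) + 1) / p) - arctan ((q : ℝ) / p)) / p := by
  have hp0 : 0 < p := lt_of_lt_of_le one_pos hp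
  have hD : (0:ℝ) < p ^ 2 + ((q : ℝ) + 1) ^ 2 := by positivity
  set A : ℝ := (q : ℝ) / p with hA
  set B : ℝ := ((q : ℝ) + 1) / p with hB
  have hAB : A ≤ B := by rw [hA, hB]; gcongr; linarith
  have hint : IntervalIntegrable (fun x : ℝ => 1 / (1 + x ^ 2)) MeasureTheory.volume A B := by
    apply Continuous.intervalIntegrable
    have : ∀ x : ℝ, 1 + x ^ 2 ≠ 0 := fun x => by positivity
    exact continuous_const.div (by continuity) this
  have hA0 : 0 ≤ A := by positivity
  have key : ∫ x in A..B, (1 / (1 + B ^ 2) : ℝ) ≤ ∫ x in A..B, 1 / (1 + x ^ 2) := by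
    apply intervalIntegral.integral_mono_on hAB (by simp [intervalIntegrable_const]) hint
    intro x hx
    have hx0 : 0 ≤ x := le_trans hA0 hx.1
    have h2 : x ^ 2 ≤ B ^ 2 := by nlinarith [hx.2]
    have h1 : (0:ℝ) < 1 + x ^ 2 := by positivity
    gcongr
  rw [intervalIntegral.integral_const, integral_one_div_one_add_sq] at key
  have hcalc : (B - A) • (1 / (1 + B ^ 2) : ℝ) = p / (p ^ 2 + ((q : ℝ) + 1) ^ 2) := by
    rw [smul_eq_mul, hA, hB]
    have h2 : (0:ℝ) < 1 + (((q:ℝ)+1)/p) ^ 2 := by positivity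
    field_simp
    ring
  rw [hcalc] at key
  calc 1 / (p ^ 2 + ((q : ℝ) + 1) ^ 2)
      = (p / (p ^ 2 + ((q : ℝ) + 1) ^ 2)) / p := by
        field_simp
    _ ≤ (arctan B - arctan A) / p := by gcongr

lemma colA (p : ℝ) (hp : 1 ≤ p) (P : ℕ) :
    ∑ q ∈ range P, 1 / (p ^ 2 + ((q : ℝ) + 1) ^ 2) ≤ π / (2 * p) := by
  have hp0 : 0 < p := lt_of_lt_of_le one_pos hp
  calc ∑ q ∈ range P, 1 / (p ^ 2 + ((q : ℝ) + 1) ^ 2)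
      ≤ ∑ q ∈ range P, (arctan (((q : ℝ) + 1) / p) - arctan ((q : ℝ) / p)) / p :=
        Finset.sum_le_sum fun q _ => term_le p hp q
    _ = (∑ q ∈ range P, (arctan ((((q+1) : ℕ) : ℝ) / p) - arctan (((q : ℕ) : ℝ) / p))) / p := by
        rw [← Finset.sum_div]; congr 1; apply Finset.sum_congr rfl; intro q _; push_cast; ring_nf
    _ = (arctan ((P : ℝ) / p) - arctan ((0 : ℕ) / p)) / p := by
        rw [Finset.sum_range_sub (fun n : ℕ => arctan ((n : ℝ) / p))]
    _ = arctan ((P : ℝ) / p) / p := by norm_num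
    _ ≤ (π / 2) / p := by
        gcongr
        exact (Real.arctan_lt_pi_div_two _).le
    _ = π / (2 * p) := by ring

lemma sq_sum (P : ℕ) : ∑ q ∈ range P, 1 / ((q : ℝ) + 1) ^ 2 ≤ 2 := by
  have h : ∀ q : ℕ, 1 / ((q : ℝ) + 1) ^ 2 ≤
      2 * ((-(1 / ((q : ℝ) + 1 + 1))) - (-(1 / ((q : ℝ) + 1)))) := by
    intro q
    have h1 : (0:ℝ) < (q : ℝ) + 1 := by positivity
    have h2 : (0:ℝ) < (q : ℝ) + 2 := by positivity
    rw [div_le_iff₀ (by positivity)]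
    have : 2 * ((-(1 / ((q : ℝ) + 1 + 1))) - (-(1 / ((q : ℝ) + 1)))) =
        2 / (((q:ℝ)+1) * ((q:ℝ)+2)) := by field_simp; ring
    rw [this, div_mul_eq_mul_div, le_div_iff₀ (by positivity)]
    nlinarith
  calc ∑ q ∈ range P, 1 / ((q : ℝ) + 1) ^ 2
      ≤ ∑ q ∈ range P, 2 * ((-(1 / (((q+1 : ℕ) : ℝ) + 1))) - (-(1 / (((q:ℕ) : ℝ) + 1)))) := by
        apply Finset.sum_le_sum; intro q _
        have := h q; push_cast at this ⊢; linarith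
    _ = 2 * ((-(1 / ((P : ℝ) + 1))) - (-(1 / (((0:ℕ) : ℝ) + 1)))) := by
        rw [← Finset.mul_sum, Finset.sum_range_sub (fun n : ℕ => -(1 / ((n : ℝ) + 1)))]
    _ ≤ 2 := by
        have : (0:ℝ) < (P : ℝ) + 1 := by positivity
        have : 0 ≤ 1 / ((P : ℝ) + 1) := by positivity
        norm_num; linarith

lemma harm_sum (P : ℕ) : ∑ q ∈ range P, 1 / ((q : ℝ) + 1) ≤ 1 + Real.log P := by
  have := harmonic_le_one_add_log P
  have heq : ((harmonic P : ℚ) : ℝ) = ∑ q ∈ range P, 1 / ((q : ℝ) + 1) := by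
    rw [harmonic]; push_cast; apply Finset.sum_congr rfl; intro q _; rw [one_div]
  linarith [heq ▸ this]

lemma sum_Icc_symm (f : ℤ → ℝ) (hf : ∀ q, f (-q) = f q) (P : ℕ) :
    ∑ q ∈ Finset.Icc (-(P : ℤ)) (P : ℤ), f q = f 0 + ∑ q ∈ range P, 2 * f ((q : ℤ) + 1) := by
  induction P with
  | zero => simp
  | succ n ih =>
    have h1 : Finset.Icc (-((n+1 : ℕ) : ℤ)) ((n+1 : ℕ) : ℤ) =
        insert (-((n : ℤ) + 1)) (insert ((n : ℤ) + 1) (Finset.Icc (-(n : ℤ)) (n : ℤ))) := by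
      ext x; simp; omega
    rw [h1, Finset.sum_insert (by simp only [Finset.mem_insert, Finset.mem_Icc]; omega),
      Finset.sum_insert (by simp only [Finset.mem_Icc]; omega), ih,
      Finset.sum_range_succ, hf]
    push_cast
    ring

lemma box_bound (P : ℕ) :
    ∑ t ∈ (Finset.Icc (-(P : ℤ)) (P : ℤ)) ×ˢ (Finset.Icc (-(P : ℤ)) (P : ℤ)),
        1 / ((t.1 : ℝ) ^ 2 + (t.2 : ℝ) ^ 2) ≤ 8 + 2 * π + 2 * π * Real.log P := by
  have hπ : (0:ℝ) < π := Real.pi_pos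
  set Cin : ℤ → ℝ := fun p => ∑ q ∈ Finset.Icc (-(P : ℤ)) (P : ℤ),
    1 / ((p : ℝ) ^ 2 + (q : ℝ) ^ 2) with hCin
  have hinner_symm : ∀ p : ℤ, ∀ q : ℤ,
      (1 : ℝ) / ((p : ℝ) ^ 2 + ((-q : ℤ) : ℝ) ^ 2) = 1 / ((p : ℝ) ^ 2 + (q : ℝ) ^ 2) := by
    intro p q; push_cast; rw [neg_sq]
  have hCin_eq : ∀ p : ℤ, Cin p = 1 / ((p : ℝ) ^ 2) +
      ∑ q ∈ range P, 2 * (1 / ((p : ℝ) ^ 2 + ((q : ℝ) + 1) ^ 2)) := by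
    intro p
    simp only [hCin]
    rw [sum_Icc_symm (fun q : ℤ => 1 / ((p : ℝ) ^ 2 + (q : ℝ) ^ 2)) (hinner_symm p) P]
    norm_num
  have hCin_symm : ∀ p : ℤ, Cin (-p) = Cin p := by
    intro p
    rw [hCin]
    apply Finset.sum_congr rfl
    intro q _
    push_cast
    rw [neg_sq]
  have hCin_pos : ∀ p : ℕ, Cin ((p : ℤ) + 1) ≤ 1 / ((p : ℝ) + 1) ^ 2 + π / ((p : ℝ) + 1) := by
    intro p
    have hr : (1:ℝ) ≤ (p : ℝ) + 1 := by
      have h : (0:ℝ) ≤ (p : ℝ) := Nat.cast_nonneg p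
      linarith
    rw [hCin_eq]
    have h1 : (((p : ℤ) + 1 : ℤ) : ℝ) = (p : ℝ) + 1 := by push_cast; ring
    rw [h1]
    have h2 : ∑ q ∈ range P, 2 * (1 / (((p : ℝ) + 1) ^ 2 + ((q : ℝ) + 1) ^ 2)) ≤
        2 * (π / (2 * ((p : ℝ) + 1))) := by
      rw [← Finset.mul_sum]
      have := colA ((p : ℝ) + 1) hr P
      linarith
    have h3 : 2 * (π / (2 * ((p : ℝ) + 1))) = π / ((p : ℝ) + 1) := by
      field_simp
    linarith
  have hCin_zero : Cin 0 ≤ 4 := by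
    rw [hCin_eq]
    have h2 := sq_sum P
    have heq : ∑ q ∈ range P, 2 * (1 / (((0:ℤ) : ℝ) ^ 2 + ((q : ℝ) + 1) ^ 2)) =
        2 * ∑ q ∈ range P, 1 / (((q : ℝ) + 1) ^ 2) := by
      rw [Finset.mul_sum]
      apply Finset.sum_congr rfl
      intro q _
      norm_num
    rw [heq]
    have h0 : 1 / (((0:ℤ) : ℝ)) ^ 2 = 0 := by norm_num
    rw [h0]
    linarith
  calc ∑ t ∈ (Finset.Icc (-(P : ℤ)) (P : ℤ)) ×ˢ (Finset.Icc (-(P : ℤ)) (P : ℤ)),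
        1 / ((t.1 : ℝ) ^ 2 + (t.2 : ℝ) ^ 2)
      = ∑ p ∈ Finset.Icc (-(P : ℤ)) (P : ℤ), Cin p := by
        rw [Finset.sum_product]
    _ = Cin 0 + ∑ p ∈ range P, 2 * Cin ((p : ℤ) + 1) := sum_Icc_symm Cin hCin_symm P
    _ ≤ 4 + ∑ p ∈ range P, 2 * (1 / ((p : ℝ) + 1) ^ 2 + π / ((p : ℝ) + 1)) := by
        gcongr with p hp
        exact hCin_pos p
    _ = 4 + (2 * ∑ p ∈ range P, 1 / ((p : ℝ) + 1) ^ 2 +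
          2 * π * ∑ p ∈ range P, 1 / ((p : ℝ) + 1)) := by
        rw [Finset.mul_sum, Finset.mul_sum, ← Finset.sum_add_distrib]
        congr 1
        apply Finset.sum_congr rfl
        intro p _
        ring
    _ ≤ 8 + 2 * π + 2 * π * Real.log P := by
        have h1 := sq_sum P
        have h2 := harm_sum P
        have h3 : 2 * π * (∑ p ∈ range P, 1 / ((p : ℝ) + 1)) ≤ 2 * π * (1 + Real.log P) :=
          mul_le_mul_of_nonneg_left h2 (by positivity)
        nlinarith

lemma IsGaussianInt.sub {z w : ℂ} (hz : IsGaussianInt z) (hw : IsGaussianInt w) :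
    IsGaussianInt (z - w) := by
  obtain ⟨a1, b1, rfl⟩ := hz
  obtain ⟨a2, b2, rfl⟩ := hw
  exact ⟨a1 - a2, b1 - b2, by push_cast; ring⟩

lemma gauss_round (z : ℂ) (h : IsGaussianInt z) :
    z = ((round z.re : ℤ) : ℂ) + ((round z.im : ℤ) : ℂ) * Complex.I := by
  obtain ⟨a, b, rfl⟩ := h
  have hre : ((a : ℂ) + (b : ℂ) * Complex.I).re = (a : ℝ) := by simp
  have him : ((a : ℂ) + (b : ℂ) * Complex.I).im = (b : ℝ) := by simp
  rw [hre, him, round_intCast, round_intCast]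

/-- There is an absolute constant `a` such that for every set `G` of `m ≥ 2` distinct Gaussian
integers of absolute value at most `1 + √(m/π)` and every `b ∈ G`,
`(1/(m-1)) ∑_{w ∈ G, w ≠ b} 1/|b-w|² ≤ (a + π log m)/m`. -/
theorem stmt6 :
    ∃ a : ℝ, ∀ (m : ℕ), 2 ≤ m → ∀ G : Finset ℂ, G.card = m →
      (∀ z ∈ G, IsGaussianInt z) →
      (∀ z ∈ G, ‖z‖ ≤ 1 + Real.sqrt (m / Real.pi)) →
      ∀ b ∈ G,
        (1 / (m - 1 : ℝ)) * ∑ w ∈ G.erase b, 1 / ‖b - w‖ ^ 2 ≤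
          (a + Real.pi * Real.log m) / m := by
  use 100
  intro m hm G hcard hGauss habs b hb
  have hπ : (0:ℝ) < π := Real.pi_pos
  have hm2 : (2:ℝ) ≤ (m : ℝ) := by exact_mod_cast hm
  set R : ℝ := 1 + Real.sqrt ((m : ℝ) / π) with hR
  have hsq0 : 0 ≤ Real.sqrt ((m : ℝ) / π) := Real.sqrt_nonneg _
  have hR1 : 1 ≤ R := by rw [hR]; linarith
  set P : ℕ := ⌈2 * R⌉₊ with hP
  have hPR : 2 * R ≤ (P : ℝ) := Nat.le_ceil _
  have hP1 : 1 ≤ P := by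
    have : (0:ℝ) < 2 * R := by linarith
    exact Nat.ceil_pos.mpr this
  set κ : ℂ → ℤ × ℤ := fun w => (round ((b - w).re), round ((b - w).im)) with hκ
  have hrep : ∀ w ∈ G, b - w = (((κ w).1 : ℂ) + ((κ w).2 : ℂ) * Complex.I) := by
    intro w hw
    exact gauss_round _ ((hGauss b hb).sub (hGauss w hw))
  have hterm : ∀ w ∈ G, (1 : ℝ) / ‖b - w‖ ^ 2 =
      1 / ((((κ w).1 : ℝ)) ^ 2 + (((κ w).2 : ℝ)) ^ 2) := by
    intro w hw
    rw [Complex.sq_norm, hrep w hw]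
    simp [Complex.normSq_apply]
    ring_nf
  have hre_eq : ∀ w ∈ G, (b - w).re = (((κ w).1 : ℝ)) := by
    intro w hw
    conv_lhs => rw [hrep w hw]
    simp
  have him_eq : ∀ w ∈ G, (b - w).im = (((κ w).2 : ℝ)) := by
    intro w hw
    conv_lhs => rw [hrep w hw]
    simp
  have hmem : ∀ w ∈ G.erase b, κ w ∈
      (Finset.Icc (-(P : ℤ)) (P : ℤ)) ×ˢ (Finset.Icc (-(P : ℤ)) (P : ℤ)) := by
    intro w hw
    have hwG := Finset.mem_of_mem_erase hw
    have h1 : ‖b - w‖ ≤ 2 * R := by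
      have h2 := norm_add_le b (-w)
      have h3 : ‖-w‖ = ‖w‖ := by simp
      have h4 := habs b hb
      have h5 := habs w hwG
      rw [h3] at h2
      rw [sub_eq_add_neg]
      calc ‖b + -w‖ ≤ ‖b‖ + ‖w‖ := h2
        _ ≤ 2 * R := by linarith
    have hre : |(((κ w).1 : ℝ))| ≤ (P : ℝ) := by
      rw [← hre_eq w hwG]
      exact le_trans (le_trans (Complex.abs_re_le_norm _) h1) hPR
    have him : |(((κ w).2 : ℝ))| ≤ (P : ℝ) := by
      rw [← him_eq w hwG]
      exact le_trans (le_trans (Complex.abs_im_le_norm _) h1) hPR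
    have hre' : |(κ w).1| ≤ (P : ℤ) := by exact_mod_cast hre
    have him' : |(κ w).2| ≤ (P : ℤ) := by exact_mod_cast him
    simp only [Finset.mem_product, Finset.mem_Icc]
    constructor
    · constructor <;> [linarith [abs_le.mp hre'] ; linarith [(abs_le.mp hre').2]]
    · constructor <;> [linarith [abs_le.mp him'] ; linarith [(abs_le.mp him').2]]
  have hinj : ∀ x ∈ G.erase b, ∀ y ∈ G.erase b, κ x = κ y → x = y := by
    intro x hx y hy hxy
    have hx' := Finset.mem_of_mem_erase hx
    have hy' := Finset.mem_of_mem_erase hy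
    have h : b - x = b - y := by rw [hrep x hx', hrep y hy', hxy]
    linear_combination -h
  have hsum : ∑ w ∈ G.erase b, 1 / ‖b - w‖ ^ 2 =
      ∑ t ∈ (G.erase b).image κ, 1 / ((t.1 : ℝ) ^ 2 + (t.2 : ℝ) ^ 2) := by
    rw [Finset.sum_image hinj]
    exact Finset.sum_congr rfl fun w hw => hterm w (Finset.mem_of_mem_erase hw)
  have hsubset : (G.erase b).image κ ⊆
      (Finset.Icc (-(P : ℤ)) (P : ℤ)) ×ˢ (Finset.Icc (-(P : ℤ)) (P : ℤ)) := by
    intro t ht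
    obtain ⟨w, hw, rfl⟩ := Finset.mem_image.mp ht
    exact hmem w hw
  have hS : ∑ w ∈ G.erase b, 1 / ‖b - w‖ ^ 2 ≤ 8 + 2 * π + 2 * π * Real.log P := by
    rw [hsum]
    refine le_trans (Finset.sum_le_sum_of_subset_of_nonneg hsubset fun t _ _ => by positivity) ?_
    exact box_bound P
  -- bound log P
  have hsqm : (1.4 : ℝ) ≤ Real.sqrt m := by
    rw [show (1.4:ℝ) = Real.sqrt (1.96) by
      rw [show (1.96:ℝ) = 1.4 ^ 2 by norm_num, Real.sqrt_sq (by norm_num)]]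
    exact Real.sqrt_le_sqrt (by linarith)
  have hsqrt_div : Real.sqrt ((m : ℝ) / π) ≤ 0.6 * Real.sqrt m := by
    have h1 : (m : ℝ) / π ≤ 0.36 * m := by
      rw [div_le_iff₀ hπ]
      nlinarith [Real.pi_gt_three]
    calc Real.sqrt ((m : ℝ) / π) ≤ Real.sqrt (0.36 * m) := Real.sqrt_le_sqrt h1
      _ = Real.sqrt 0.36 * Real.sqrt m := Real.sqrt_mul (by norm_num) _
      _ = 0.6 * Real.sqrt m := by
          rw [show (0.36:ℝ) = 0.6 ^ 2 by norm_num, Real.sqrt_sq (by norm_num)]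
  have hPm : (P : ℝ) ≤ 3.5 * Real.sqrt m := by
    have hceil : (P : ℝ) < 2 * R + 1 := Nat.ceil_lt_add_one (by linarith)
    have h6 : 2 * R + 1 = 3 + 2 * Real.sqrt ((m : ℝ) / π) := by rw [hR]; ring
    have h7 : (P : ℝ) < 3 + 2 * Real.sqrt ((m : ℝ) / π) := by rw [← h6]; exact hceil
    linarith [h7, hsqrt_div, hsqm]
  have hlogP : Real.log P ≤ 1.45 + Real.log m / 2 := by
    have hP0 : (0:ℝ) < (P : ℝ) := by
      have : (1:ℕ) ≤ P := hP1
      exact_mod_cast Nat.pos_of_ne_zero (by omega)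
    have h1 : Real.log P ≤ Real.log (3.5 * Real.sqrt m) :=
      Real.log_le_log hP0 hPm
    have hsm : (0:ℝ) < Real.sqrt m := by linarith
    have h2 : Real.log (3.5 * Real.sqrt m) = Real.log 3.5 + Real.log (Real.sqrt m) :=
      Real.log_mul (by norm_num) (by linarith)
    have h3 : Real.log (Real.sqrt m) = Real.log m / 2 :=
      Real.log_sqrt (by positivity)
    have h4 : Real.log (3.5 : ℝ) ≤ 1.45 := by
      have : (3.5:ℝ) = 1.75 * 2 := by norm_num
      rw [this, Real.log_mul (by norm_num) (by norm_num)]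
      have h5 : Real.log (1.75 : ℝ) ≤ 0.75 := by
        have := Real.log_le_sub_one_of_pos (show (0:ℝ) < 1.75 by norm_num)
        linarith
      have h6 := Real.log_two_lt_d9
      linarith
    linarith
  have hL0 : 0 ≤ Real.log m := Real.log_nonneg (by linarith)
  have hLm : Real.log m ≤ (m : ℝ) - 1 := by
    have := Real.log_le_sub_one_of_pos (show (0:ℝ) < m by linarith)
    linarith
  have hS28 : ∑ w ∈ G.erase b, 1 / ‖b - w‖ ^ 2 ≤ 28 + π * Real.log m := by
    have h4 : π ≤ 4 := Real.pi_le_four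
    have h5 : 2 * π * Real.log P ≤ 2 * π * (1.45 + Real.log m / 2) :=
      mul_le_mul_of_nonneg_left hlogP (by positivity)
    nlinarith
  have hS0 : 0 ≤ ∑ w ∈ G.erase b, 1 / ‖b - w‖ ^ 2 :=
    Finset.sum_nonneg fun w _ => by positivity
  rw [one_div, inv_mul_eq_div, div_le_div_iff₀ (by linarith) (by linarith)]
  set S := ∑ w ∈ G.erase b, 1 / ‖b - w‖ ^ 2
  set L := Real.log m
  have h4 : π ≤ 4 := Real.pi_le_four
  have hmS : S * (m : ℝ) ≤ (28 + π * L) * m :=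
    mul_le_mul_of_nonneg_right hS28 (by linarith)
  have hπL : π * L ≤ 4 * L := mul_le_mul_of_nonneg_right h4 hL0
  nlinarith
end

section
/- (Variation on Brown's lemma) Let S, T be bounded operators on ℓ₂^m (m ≤ ∞), λ ∈ ℂ, and M a finite-dimensional subspace such that the range of [S,T] + λI is contained in M. Then there exist mutually orthogonal subspaces H₀, H₁, H₂, … with H₀ = M, dim Hₙ ≤ (n+1)·dim M for n ≥ 1, such that PᵢSPⱼ = PᵢTPⱼ = 0 whenever i > j+1 (Pₗ the orthogonal projection onto Hₗ), and the closed span of ⋃ₙ Hₙ is invariant under both S and T. -/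
open Submodule Module

section Brown

variable {H : Type*} [NormedAddCommGroup H] [InnerProductSpace ℂ H]

def brownA (n : ℕ) : Finset (ℕ × ℕ) :=
  (Finset.range (n+1) ×ˢ Finset.range (n+1)).filter fun p => p.1 + p.2 ≤ n

lemma mem_brownA {n : ℕ} {p : ℕ × ℕ} : p ∈ brownA n ↔ p.1 + p.2 ≤ n := by
  simp only [brownA, Finset.mem_filter, Finset.mem_product, Finset.mem_range]
  omega

noncomputable def brownE (S T : H →L[ℂ] H) (M : Submodule ℂ H) (n : ℕ) : Submodule ℂ H :=
  (brownA n).sup fun p => M.map ((T ^ p.1 * S ^ p.2) : H →L[ℂ] H).toLinearMap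

variable (S T : H →L[ℂ] H) (M : Submodule ℂ H)

lemma brownE_mono {m n : ℕ} (h : m ≤ n) : brownE S T M m ≤ brownE S T M n :=
  Finset.sup_mono fun p hp => mem_brownA.2 (le_trans (mem_brownA.1 hp) h)

lemma map_le_brownE {a b n : ℕ} (h : a + b ≤ n) :
    M.map ((T ^ a * S ^ b) : H →L[ℂ] H).toLinearMap ≤ brownE S T M n :=
  Finset.le_sup (f := fun p : ℕ × ℕ => M.map ((T ^ p.1 * S ^ p.2) : H →L[ℂ] H).toLinearMap)
    (show ((a, b) : ℕ × ℕ) ∈ brownA n from mem_brownA.2 h)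

lemma M_le_brownE (n : ℕ) : M ≤ brownE S T M n := by
  have h := map_le_brownE S T M (a := 0) (b := 0) (n := n) (by omega)
  have h1 : ((T ^ 0 * S ^ 0 : H →L[ℂ] H)).toLinearMap = LinearMap.id := by ext x; simp
  rwa [h1, Submodule.map_id] at h

lemma brownE_zero : brownE S T M 0 = M := by
  apply le_antisymm _ (M_le_brownE S T M 0)
  apply Finset.sup_le
  intro p hp
  have : p = (0, 0) := by have := mem_brownA.1 hp; ext <;> omega
  subst this
  have h1 : ((T ^ 0 * S ^ 0 : H →L[ℂ] H)).toLinearMap = LinearMap.id := by ext x; simp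
  simp only [h1, Submodule.map_id]
  exact le_rfl

lemma finset_sup_fd {ι : Type*} (s : Finset ι) (f : ι → Submodule ℂ H)
    (hf : ∀ i, FiniteDimensional ℂ (f i)) : FiniteDimensional ℂ ↥(s.sup f) := by
  classical
  induction s using Finset.induction with
  | empty => rw [Finset.sup_empty]; exact (inferInstance : FiniteDimensional ℂ (⊥ : Submodule ℂ H))
  | insert _ _ h ih =>
      rw [Finset.sup_insert]
      exact Submodule.finiteDimensional_sup _ _ (h₁ := hf _) (h₂ := ih)

lemma finset_sup_finrank_le {ι : Type*} (s : Finset ι) (f : ι → Submodule ℂ H)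
    (hf : ∀ i, FiniteDimensional ℂ (f i)) :
    finrank ℂ ↥(s.sup f) ≤ ∑ i ∈ s, finrank ℂ (f i) := by
  classical
  induction s using Finset.induction with
  | empty => simp
  | @insert a s h ih =>
      rw [Finset.sup_insert, Finset.sum_insert h]
      haveI := finset_sup_fd s f hf
      haveI := hf a
      exact le_trans (Submodule.finrank_add_le_finrank_add_finrank _ _)
        (Nat.add_le_add_left ih _)

lemma brownE_fd [FiniteDimensional ℂ M] (n : ℕ) : FiniteDimensional ℂ (brownE S T M n) :=
  finset_sup_fd _ _ fun _ => Module.Finite.map _ _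

end Brown

section More
variable {H : Type*} [NormedAddCommGroup H] [InnerProductSpace ℂ H]
variable (S T : H →L[ℂ] H) (M : Submodule ℂ H)

lemma brown_mapT (n : ℕ) : ∀ x ∈ brownE S T M n, T x ∈ brownE S T M (n+1) := by
  intro x hx
  have key : Submodule.map T.toLinearMap (brownE S T M n) ≤ brownE S T M (n+1) := by
    rw [brownE, Submodule.map_le_iff_le_comap]
    apply Finset.sup_le
    intro p hp
    rw [← Submodule.map_le_iff_le_comap, ← Submodule.map_comp]
    have h2 : (T.toLinearMap ∘ₗ ((T ^ p.1 * S ^ p.2) : H →L[ℂ] H).toLinearMap)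
        = ((T ^ (p.1+1) * S ^ p.2) : H →L[ℂ] H).toLinearMap := by
      ext x
      simp [pow_succ', mul_assoc, ContinuousLinearMap.mul_apply]
    rw [h2]
    exact map_le_brownE _ _ _ (by have := mem_brownA.1 hp; omega)
  exact key ⟨x, hx, rfl⟩

lemma brown_keyS (lam : ℂ)
    (hrange : LinearMap.range ((S * T - T * S : H →L[ℂ] H) + lam • 1).toLinearMap ≤ M) :
    ∀ a b : ℕ, ∀ x ∈ M, S (((T ^ a * S ^ b) : H →L[ℂ] H) x) ∈ brownE S T M (a + b + 1) := by
  intro a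
  induction a with
  | zero =>
      intro b x hx
      have h1 : S (((T ^ 0 * S ^ b) : H →L[ℂ] H) x)
          = ((T ^ 0 * S ^ (b+1)) : H →L[ℂ] H) x := by
        simp [pow_succ', ContinuousLinearMap.mul_apply]
      rw [h1]
      exact map_le_brownE S T M (a := 0) (b := b+1) (le_refl _) ⟨x, hx, rfl⟩
  | succ a ih =>
      intro b x hx
      set z := ((T ^ a * S ^ b) : H →L[ℂ] H) x with hz
      set F : H →L[ℂ] H := (S * T - T * S) + lam • 1 with hFdef
      have h1 : S (((T ^ (a+1) * S ^ b) : H →L[ℂ] H) x) = S (T z) := by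
        rw [hz]
        simp [pow_succ', mul_assoc, ContinuousLinearMap.mul_apply]
      have h2 : S (T z) = T (S z) - lam • z + F z := by
        simp only [hFdef, ContinuousLinearMap.add_apply, ContinuousLinearMap.sub_apply,
          ContinuousLinearMap.smul_apply, ContinuousLinearMap.one_apply,
          ContinuousLinearMap.mul_apply]
        abel
      rw [h1, h2]
      have hT : T (S z) ∈ brownE S T M (a + 1 + b + 1) := by
        have := brown_mapT S T M (a + b + 1) (S z) (ih b x hx)
        have e : a + b + 1 + 1 = a + 1 + b + 1 := by omega
        rwa [e] at this
      have hzmem : z ∈ brownE S T M (a + 1 + b + 1) :=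
        map_le_brownE S T M (a := a) (b := b) (by omega) ⟨x, hx, rfl⟩
      have hF : F z ∈ brownE S T M (a + 1 + b + 1) :=
        M_le_brownE S T M _ (hrange ⟨z, rfl⟩)
      exact Submodule.add_mem _ (Submodule.sub_mem _ hT (Submodule.smul_mem _ _ hzmem)) hF

lemma brown_mapS (lam : ℂ)
    (hrange : LinearMap.range ((S * T - T * S : H →L[ℂ] H) + lam • 1).toLinearMap ≤ M)
    (n : ℕ) : ∀ x ∈ brownE S T M n, S x ∈ brownE S T M (n+1) := by
  intro x hx
  have key : Submodule.map S.toLinearMap (brownE S T M n) ≤ brownE S T M (n+1) := by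
    rw [brownE, Submodule.map_le_iff_le_comap]
    apply Finset.sup_le
    intro p hp
    rw [← Submodule.map_le_iff_le_comap]
    rintro _ ⟨_, ⟨y, hy, rfl⟩, rfl⟩
    exact brownE_mono S T M (by have := mem_brownA.1 hp; omega)
      (brown_keyS S T M lam hrange p.1 p.2 y hy)
  exact key ⟨x, hx, rfl⟩

end More

section Rank
variable {H : Type*} [NormedAddCommGroup H] [InnerProductSpace ℂ H]
variable (S T : H →L[ℂ] H) (M : Submodule ℂ H) [FiniteDimensional ℂ M]

lemma brownE_rank_step (n : ℕ) :
    finrank ℂ (brownE S T M (n+1)) ≤ finrank ℂ (brownE S T M n) + (n+2) * finrank ℂ M := by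
  classical
  set f : ℕ × ℕ → Submodule ℂ H :=
    fun p => M.map ((T ^ p.1 * S ^ p.2) : H →L[ℂ] H).toLinearMap with hf
  set D : Finset (ℕ × ℕ) := (Finset.range (n+2)).image (fun a => (a, n+1-a)) with hD
  have hsubset : brownA (n+1) ⊆ brownA n ∪ D := by
    intro p hp
    rcases Nat.lt_or_ge (p.1 + p.2) (n+1) with h | h
    · exact Finset.mem_union_left _ (mem_brownA.2 (by omega))
    · apply Finset.mem_union_right
      have hpe : p.1 + p.2 = n + 1 := by have := mem_brownA.1 hp; omega
      rw [hD, Finset.mem_image]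
      exact ⟨p.1, Finset.mem_range.2 (by omega), by ext <;> simp <;> omega⟩
  have hle : brownE S T M (n+1) ≤ brownE S T M n ⊔ D.sup f := by
    have he : brownE S T M n ⊔ D.sup f = (brownA n ∪ D).sup f := (Finset.sup_union).symm
    rw [he]
    exact Finset.sup_mono hsubset
  haveI hfd : ∀ p : ℕ × ℕ, FiniteDimensional ℂ (f p) := fun p => Module.Finite.map _ _
  haveI : FiniteDimensional ℂ (brownE S T M n) := brownE_fd S T M n
  haveI : FiniteDimensional ℂ ↥(D.sup f) := finset_sup_fd _ _ hfd
  calc finrank ℂ (brownE S T M (n+1))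
      ≤ finrank ℂ ↥(brownE S T M n ⊔ D.sup f) := Submodule.finrank_mono hle
    _ ≤ finrank ℂ (brownE S T M n) + finrank ℂ ↥(D.sup f) :=
        Submodule.finrank_add_le_finrank_add_finrank _ _
    _ ≤ finrank ℂ (brownE S T M n) + (n+2) * finrank ℂ M := by
        gcongr
        calc finrank ℂ ↥(D.sup f) ≤ ∑ p ∈ D, finrank ℂ (f p) := finset_sup_finrank_le _ _ hfd
          _ ≤ ∑ _p ∈ D, finrank ℂ M := by
              apply Finset.sum_le_sum
              intro p _
              exact Submodule.finrank_map_le _ _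
          _ = D.card * finrank ℂ M := by rw [Finset.sum_const, smul_eq_mul]
          _ ≤ (n+2) * finrank ℂ M := by
              gcongr
              calc D.card ≤ (Finset.range (n+2)).card := Finset.card_image_le
                _ = n + 2 := Finset.card_range _

end Rank

section Main
variable {H : Type*} [NormedAddCommGroup H] [InnerProductSpace ℂ H]

noncomputable def brownH (S T : H →L[ℂ] H) (M : Submodule ℂ H) : ℕ → Submodule ℂ H
  | 0 => M
  | (n+1) => brownE S T M (n+1) ⊓ (brownE S T M n)ᗮ

variable (S T : H →L[ℂ] H) (M : Submodule ℂ H)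

lemma brownH_le_E (n : ℕ) : brownH S T M n ≤ brownE S T M n := by
  cases n with
  | zero => exact M_le_brownE S T M 0
  | succ n => exact inf_le_left

lemma brownH_decomp [FiniteDimensional ℂ M] (n : ℕ) :
    brownE S T M n ⊔ brownH S T M (n+1) = brownE S T M (n+1) := by
  haveI := brownE_fd S T M n
  haveI : CompleteSpace ↥(brownE S T M n) := FiniteDimensional.complete ℂ _
  have h := Submodule.sup_orthogonal_inf_of_hasOrthogonalProjection
    (brownE_mono S T M (Nat.le_succ n))
  rw [show brownH S T M (n+1) = (brownE S T M n)ᗮ ⊓ brownE S T M (n+1) from inf_comm _ _]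
  exact h

lemma brownH_finrank [FiniteDimensional ℂ M] (n : ℕ) :
    finrank ℂ (brownH S T M (n+1)) ≤ (n+2) * finrank ℂ M := by
  haveI := brownE_fd S T M (n+1)
  have h := Submodule.finrank_add_inf_finrank_orthogonal (brownE_mono S T M (Nat.le_succ n))
  have h2 : (brownE S T M n)ᗮ ⊓ brownE S T M (n+1) = brownH S T M (n+1) := inf_comm _ _
  rw [h2] at h
  have h3 := brownE_rank_step S T M n
  simp only [Nat.succ_eq_add_one] at h
  omega

end Main


/-- Variation on Brown's lemma: if `S, T` are bounded operators on a complex Hilbert space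
(e.g. `ℓ₂^m`, `m ≤ ∞`), `M` is a finite-dimensional subspace and the range of `[S,T] + λI`
is contained in `M`, then there are mutually orthogonal subspaces `H₀ = M, H₁, H₂, …` with
`dim Hₙ ≤ (n+1) dim M`, such that `Pᵢ S Pⱼ = Pᵢ T Pⱼ = 0` for `i > j + 1` (expressed as:
vectors of `S x`, `T x` for `x ∈ Hⱼ` are orthogonal to `Hᵢ`), and the closed span of the
`Hₙ` is invariant under `S` and `T`. -/
theorem stmt9 {H : Type*} [NormedAddCommGroup H] [InnerProductSpace ℂ H] [CompleteSpace H]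
    (S T : H →L[ℂ] H) (lam : ℂ) (M : Submodule ℂ H) (hM : FiniteDimensional ℂ M)
    (hrange : LinearMap.range ((S * T - T * S : H →L[ℂ] H) + lam • 1).toLinearMap ≤ M) :
    ∃ Hn : ℕ → Submodule ℂ H,
      Hn 0 = M ∧
      (∀ n, FiniteDimensional ℂ (Hn n)) ∧
      (∀ n, 1 ≤ n → Module.finrank ℂ (Hn n) ≤ (n + 1) * Module.finrank ℂ M) ∧
      (∀ i j, i ≠ j → ∀ x ∈ Hn i, ∀ y ∈ Hn j, inner (𝕜 := ℂ) x y = 0) ∧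
      (∀ i j, j + 1 < i → ∀ x ∈ Hn j, ∀ y ∈ Hn i,
          inner (𝕜 := ℂ) (S x) y = 0 ∧ inner (𝕜 := ℂ) (T x) y = 0) ∧
      (∀ x ∈ (⨆ n, Hn n).topologicalClosure, S x ∈ (⨆ n, Hn n).topologicalClosure) ∧
      (∀ x ∈ (⨆ n, Hn n).topologicalClosure, T x ∈ (⨆ n, Hn n).topologicalClosure) := by
  haveI := hM
  refine ⟨brownH S T M, rfl, ?_, ?_, ?_, ?_, ?_, ?_⟩
  · -- finite dimensionality
    intro n
    cases n with
    | zero => exact hM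
    | succ n =>
        haveI := brownE_fd S T M (n+1)
        exact Submodule.finiteDimensional_of_le (brownH_le_E S T M (n+1))
  · -- dimension bound
    intro n hn
    cases n with
    | zero => omega
    | succ n =>
        have := brownH_finrank S T M n
        calc finrank ℂ (brownH S T M (n+1)) ≤ (n+2) * finrank ℂ M := this
          _ = (n + 1 + 1) * finrank ℂ M := by ring_nf
  · -- mutual orthogonality
    have key : ∀ i j, i < j → ∀ x ∈ brownH S T M i, ∀ y ∈ brownH S T M j,
        inner (𝕜 := ℂ) x y = 0 := by
      intro i j hij x hx y hy
      obtain ⟨k, rfl⟩ : ∃ k, j = k + 1 := ⟨j - 1, by omega⟩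
      have hy2 : y ∈ (brownE S T M k)ᗮ := hy.2
      have hx2 : x ∈ brownE S T M k :=
        brownE_mono S T M (by omega) (brownH_le_E S T M i hx)
      exact (Submodule.mem_orthogonal _ y).1 hy2 x hx2
    intro i j hij x hx y hy
    rcases Nat.lt_or_ge i j with h | h
    · exact key i j h x hx y hy
    · have h2 : j < i := by omega
      have := key j i h2 y hy x hx
      rw [← inner_conj_symm]
      simp [this]
  · -- block tridiagonal structure
    intro i j hij x hx y hy
    obtain ⟨k, rfl⟩ : ∃ k, i = k + 1 := ⟨i - 1, by omega⟩
    have hy2 : y ∈ (brownE S T M k)ᗮ := hy.2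
    have hxE : x ∈ brownE S T M j := brownH_le_E S T M j hx
    have hSx : S x ∈ brownE S T M k :=
      brownE_mono S T M (by omega) (brown_mapS S T M lam hrange j x hxE)
    have hTx : T x ∈ brownE S T M k :=
      brownE_mono S T M (by omega) (brown_mapT S T M j x hxE)
    exact ⟨(Submodule.mem_orthogonal _ y).1 hy2 _ hSx,
      (Submodule.mem_orthogonal _ y).1 hy2 _ hTx⟩
  all_goals {
    -- invariance of the closure
    have hsup : (⨆ n, brownH S T M n) = ⨆ n, brownE S T M n := by
      apply le_antisymm
      · exact iSup_le fun n => le_trans (brownH_le_E S T M n) (le_iSup _ n)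
      · apply iSup_le
        intro n
        induction n with
        | zero =>
            rw [brownE_zero]
            exact le_trans (le_refl (brownH S T M 0)) (le_iSup _ 0)
        | succ n ih =>
            rw [← brownH_decomp S T M n]
            exact sup_le ih (le_iSup _ (n+1))
    intro x hx
    rw [hsup] at hx ⊢
    first
    | · -- S case
        have hmap : ∀ y ∈ (⨆ n, brownE S T M n), S y ∈ ⨆ n, brownE S T M n := by
          have : Submodule.map S.toLinearMap (⨆ n, brownE S T M n)
              ≤ ⨆ n, brownE S T M n := by
            rw [Submodule.map_iSup]
            apply iSup_le
            intro n
            rintro _ ⟨y, hy, rfl⟩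
            exact le_iSup (fun n => brownE S T M n) (n+1)
              (brown_mapS S T M lam hrange n y hy)
          exact fun y hy => this ⟨y, hy, rfl⟩
        exact map_mem_closure S.continuous hx hmap
    | · -- T case
        have hmap : ∀ y ∈ (⨆ n, brownE S T M n), T y ∈ ⨆ n, brownE S T M n := by
          have : Submodule.map T.toLinearMap (⨆ n, brownE S T M n)
              ≤ ⨆ n, brownE S T M n := by
            rw [Submodule.map_iSup]
            apply iSup_le
            intro n
            rintro _ ⟨y, hy, rfl⟩
            exact le_iSup (fun n => brownE S T M n) (n+1)
              (brown_mapT S T M n y hy)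
          exact fun y hy => this ⟨y, hy, rfl⟩
        exact map_mem_closure T.continuous hx hmap
  }
end

section
/- Let M be the span of the first basis vector in ℓ₂^m, S, T matrices with range([S,T] + (1/m)I) ⊆ M, and define V₀ = M, Vₙ = span{S^k T^l M : k + l ≤ n}. Then T Vₙ ⊆ V_{n+1} and S Vₙ ⊆ V_{n+1} for all n ≥ 0. -/
/-- Let `M` be the span of the first basis vector in `ℓ₂^m`, `S, T` operators with
`range([S,T] + (1/m) I) ⊆ M`, and `Vₙ = span { S^k T^l M : k + l ≤ n }`. Then
`T Vₙ ⊆ V_{n+1}` and `S Vₙ ⊆ V_{n+1}` for all `n`. -/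
theorem stmt11 {m : ℕ} (hm : 1 ≤ m)
    (S T : EuclideanSpace ℂ (Fin m) →ₗ[ℂ] EuclideanSpace ℂ (Fin m))
    (M : Submodule ℂ (EuclideanSpace ℂ (Fin m)))
    (hMdef : M = Submodule.span ℂ {EuclideanSpace.single (⟨0, by omega⟩ : Fin m) (1 : ℂ)})
    (hrange : LinearMap.range ((S * T - T * S) + ((1 : ℂ) / m) • (1 : _)) ≤ M)
    (V : ℕ → Submodule ℂ (EuclideanSpace ℂ (Fin m)))
    (hV : ∀ n, V n = Submodule.span ℂ
        (⋃ (k : ℕ) (l : ℕ) (_ : k + l ≤ n), (S ^ k * T ^ l) '' (M : Set _))) :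
    ∀ n, (V n).map T ≤ V (n + 1) ∧ (V n).map S ≤ V (n + 1) := by
  -- generators belong to V n
  have hgen : ∀ k l n, k + l ≤ n → ∀ x ∈ M, (S ^ k * T ^ l) x ∈ V n := by
    intro k l n hkl x hx
    rw [hV n]
    apply Submodule.subset_span
    exact Set.mem_iUnion.2 ⟨k, Set.mem_iUnion.2 ⟨l, Set.mem_iUnion.2 ⟨hkl, ⟨x, hx, rfl⟩⟩⟩⟩
  -- M is contained in every V n
  have hM : ∀ n, M ≤ V n := by
    intro n x hx
    have := hgen 0 0 n (by omega) x hx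
    simpa using this
  -- monotonicity
  have hmono : ∀ {n n'}, n ≤ n' → V n ≤ V n' := by
    intro n n' h
    rw [hV n, hV n']
    apply Submodule.span_mono
    intro y hy
    obtain ⟨k, hk⟩ := Set.mem_iUnion.1 hy
    obtain ⟨l, hl⟩ := Set.mem_iUnion.1 hk
    obtain ⟨hkl, hmem⟩ := Set.mem_iUnion.1 hl
    exact Set.mem_iUnion.2 ⟨k, Set.mem_iUnion.2 ⟨l, Set.mem_iUnion.2 ⟨by omega, hmem⟩⟩⟩
  -- S maps V n into V (n+1)
  have hS : ∀ n, (V n).map S ≤ V (n + 1) := by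
    intro n
    rw [Submodule.map_le_iff_le_comap, hV n, Submodule.span_le]
    intro y hy
    obtain ⟨k, hk⟩ := Set.mem_iUnion.1 hy
    obtain ⟨l, hl⟩ := Set.mem_iUnion.1 hk
    obtain ⟨hkl, x, hx, rfl⟩ := Set.mem_iUnion.1 hl
    have h1 : (S ^ (k + 1) * T ^ l) = S * (S ^ k * T ^ l) := by
      rw [pow_succ', mul_assoc]
    have h2 : S ((S ^ k * T ^ l) x) = (S ^ (k + 1) * T ^ l) x := by
      rw [h1]; rfl
    show (S ^ k * T ^ l) x ∈ Submodule.comap S (V (n + 1))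
    rw [Submodule.mem_comap, h2]
    exact hgen (k + 1) l (n + 1) (by omega) x hx
  -- key: T applied to a generator of level k + l lands in V (k + l + 1)
  have hkey : ∀ k l, ∀ x ∈ M, T ((S ^ k * T ^ l) x) ∈ V (k + l + 1) := by
    intro k
    induction k with
    | zero =>
      intro l x hx
      have : T ((S ^ 0 * T ^ l) x) = (S ^ 0 * T ^ (l + 1)) x := by
        have : (T ^ (l + 1)) = T * T ^ l := by rw [pow_succ']
        simp only [one_pow, pow_zero, one_mul, this, Module.End.mul_apply]
      rw [this]
      exact hgen 0 (l + 1) (0 + l + 1) (by omega) x hx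
    | succ k ih =>
      intro l x hx
      set y := (S ^ k * T ^ l) x with hy
      have h1 : (S ^ (k + 1) * T ^ l) x = S y := by
        have h1' : (S ^ (k + 1) * T ^ l) = S * (S ^ k * T ^ l) := by
          rw [pow_succ', mul_assoc]
        rw [hy, h1']; rfl
      rw [h1]
      -- T (S y) = S (T y) - ((S T - T S + (1/m) • 1) y) + (1/m) • y
      have h2 : T (S y) = S (T y) - ((S * T - T * S + ((1 : ℂ) / m) • (1 : _)) y)
          + ((1 : ℂ) / m) • y := by
        simp only [LinearMap.add_apply, LinearMap.sub_apply, Module.End.mul_apply,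
          LinearMap.smul_apply, Module.End.one_apply]
        abel
      rw [h2]
      have hA : S (T y) ∈ V (k + 1 + l + 1) := by
        have := ih l x hx
        have h' : S (T y) ∈ (V (k + l + 1)).map S :=
          Submodule.mem_map_of_mem this
        exact hmono (by omega) (hS (k + l + 1) h')
      have hB : ((S * T - T * S + ((1 : ℂ) / m) • (1 : _)) y) ∈ V (k + 1 + l + 1) :=
        hM _ (hrange ⟨y, rfl⟩)
      have hC : ((1 : ℂ) / m) • y ∈ V (k + 1 + l + 1) :=
        Submodule.smul_mem _ _ (hgen k l (k + 1 + l + 1) (by omega) x hx)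
      exact Submodule.add_mem _ (Submodule.sub_mem _ hA hB) hC
  intro n
  constructor
  · rw [Submodule.map_le_iff_le_comap, hV n, Submodule.span_le]
    intro y hy
    obtain ⟨k, hk⟩ := Set.mem_iUnion.1 hy
    obtain ⟨l, hl⟩ := Set.mem_iUnion.1 hk
    obtain ⟨hkl, x, hx, rfl⟩ := Set.mem_iUnion.1 hl
    show (S ^ k * T ^ l) x ∈ Submodule.comap T (V (n + 1))
    rw [Submodule.mem_comap]
    exact hmono (by omega) (hkey k l x hx)
  · exact hS n
end

section
/- Let s₁ ≥ s₂ ≥ … ≥ s_m ≥ 0 satisfy ∑_{i=1}^{l} sᵢ ≥ √l / 6 for every l ≤ m. Then ∑_{i=1}^{m} sᵢ² ≥ c·log m for some absolute constant c > 0. -/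
open Finset Real

/-- Abel summation: if partial sums of `a` are nonneg and `u` is antitone nonneg,
then `∑ u i * a i ≥ 0`. -/
lemma abel_nonneg' (u a : ℕ → ℝ) (m : ℕ)
    (hu : ∀ i, 0 ≤ u i) (humono : ∀ i, u (i+1) ≤ u i)
    (hA : ∀ l, l ≤ m → 0 ≤ ∑ i ∈ range l, a i) :
    0 ≤ ∑ i ∈ range m, u i * a i := by
  have h := Finset.sum_range_by_parts u a m
  simp only [smul_eq_mul] at h
  rw [h]
  have h1 : 0 ≤ u (m - 1) * ∑ i ∈ range m, a i :=
    mul_nonneg (hu _) (hA m le_rfl)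
  have h2 : ∑ i ∈ range (m - 1), (u (i + 1) - u i) * ∑ j ∈ range (i + 1), a j ≤ 0 := by
    apply Finset.sum_nonpos
    intro i hi
    simp only [mem_range] at hi
    apply mul_nonpos_of_nonpos_of_nonneg
    · linarith [humono i]
    · exact hA (i + 1) (by omega)
  linarith

lemma sqrt_diff_eq (i : ℕ) :
    Real.sqrt (i+1) - Real.sqrt i = 1 / (Real.sqrt (i+1) + Real.sqrt i) := by
  have h1 : Real.sqrt (i+1) ^ 2 = (i : ℝ) + 1 := Real.sq_sqrt (by positivity)
  have h2 : Real.sqrt i ^ 2 = (i : ℝ) := Real.sq_sqrt (by positivity)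
  have h3 : (0:ℝ) < Real.sqrt (i+1) := Real.sqrt_pos.2 (by positivity)
  have h4 : (0:ℝ) ≤ Real.sqrt i := Real.sqrt_nonneg _
  have hne : Real.sqrt (i+1) + Real.sqrt i ≠ 0 := by positivity
  field_simp
  nlinarith [h1, h2]

/-- If `s₁ ≥ s₂ ≥ … ≥ s_m ≥ 0` satisfy `∑_{i=1}^l sᵢ ≥ √l / 6` for every `l ≤ m`, then
`∑ᵢ sᵢ² ≥ c log m` for some absolute constant `c > 0`. -/
theorem stmt17 :
    ∃ c : ℝ, 0 < c ∧ ∀ (m : ℕ) (s : Fin m → ℝ),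
      Antitone s → (∀ i, 0 ≤ s i) →
      (∀ l : ℕ, l ≤ m →
        Real.sqrt l / 6 ≤ ∑ i ∈ Finset.univ.filter (fun i : Fin m => (i : ℕ) < l), s i) →
      c * Real.log m ≤ ∑ i, s i ^ 2 := by
  refine ⟨1/144, by norm_num, fun m s _ _ hsum => ?_⟩
  set s' : ℕ → ℝ := fun i => if h : i < m then s ⟨i, h⟩ else 0 with hs'
  set t : ℕ → ℝ := fun i => (Real.sqrt (i+1) - Real.sqrt i) / 6 with ht
  -- basic facts about t
  have htpos : ∀ i : ℕ, 1 / (12 * Real.sqrt (i+1)) ≤ t i := by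
    intro i
    rw [ht]
    simp only []
    rw [sqrt_diff_eq i]
    have h3 : (0:ℝ) < Real.sqrt (i+1) := Real.sqrt_pos.2 (by positivity)
    have h4 : Real.sqrt i ≤ Real.sqrt (i+1) := Real.sqrt_le_sqrt (by push_cast; linarith)
    have h5 : (0:ℝ) ≤ Real.sqrt i := Real.sqrt_nonneg _
    rw [div_div]
    apply one_div_le_one_div_of_le (by positivity)
    nlinarith
  have ht_nonneg : ∀ i, 0 ≤ t i := by
    intro i
    have := htpos i
    have h3 : (0:ℝ) < Real.sqrt (i+1) := Real.sqrt_pos.2 (by positivity)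
    have : (0:ℝ) < 1 / (12 * Real.sqrt (i+1)) := by positivity
    linarith [htpos i]
  have ht_anti : ∀ i, t (i+1) ≤ t i := by
    intro i
    rw [ht]
    simp only []
    rw [sqrt_diff_eq i, sqrt_diff_eq (i+1)]
    rw [div_div, div_div]
    apply one_div_le_one_div_of_le
    · have h3 : (0:ℝ) < Real.sqrt (i+1) := Real.sqrt_pos.2 (by positivity)
      have h5 : (0:ℝ) ≤ Real.sqrt i := Real.sqrt_nonneg _
      positivity
    · have h4 : Real.sqrt i ≤ Real.sqrt (i+1) := Real.sqrt_le_sqrt (by push_cast; linarith)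
      have h6 : Real.sqrt (i+1) ≤ Real.sqrt (i+1+1) := Real.sqrt_le_sqrt (by push_cast; linarith)
      push_cast
      linarith
  -- partial sums of t telescope
  have ht_sum : ∀ l : ℕ, ∑ i ∈ range l, t i = Real.sqrt l / 6 := by
    intro l
    induction l with
    | zero => simp
    | succ n ih =>
      rw [Finset.sum_range_succ, ih, ht]
      push_cast
      ring
  -- filter sums equal range sums of s'
  have hfilter : ∀ l : ℕ, l ≤ m →
      ∑ i ∈ Finset.univ.filter (fun i : Fin m => (i : ℕ) < l), s i = ∑ i ∈ range l, s' i := by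
    intro l hl
    rw [Finset.sum_filter]
    have e1 : ∀ i : Fin m, (if (i : ℕ) < l then s i else 0)
        = (fun j : ℕ => if j < l then s' j else 0) (i : ℕ) := by
      intro i
      by_cases h : (i : ℕ) < l
      · simp [h, hs', i.isLt]
      · simp [h]
    rw [Finset.sum_congr rfl (fun i _ => e1 i),
      Fin.sum_univ_eq_sum_range (fun j : ℕ => if j < l then s' j else 0) m]
    rw [← Finset.sum_filter]
    congr 1
    ext x
    simp only [Finset.mem_filter, Finset.mem_range]
    omega
  -- partial sums of a := s' - t are nonneg
  have hA : ∀ l, l ≤ m → 0 ≤ ∑ i ∈ range l, (s' i - t i) := by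
    intro l hl
    rw [Finset.sum_sub_distrib, ht_sum l]
    have := hsum l hl
    rw [hfilter l hl] at this
    linarith
  -- Abel: ∑ t s' ≥ ∑ t²
  have habel : ∑ i ∈ range m, t i ^ 2 ≤ ∑ i ∈ range m, t i * s' i := by
    have h := abel_nonneg' t (fun i => s' i - t i) m ht_nonneg ht_anti hA
    have : ∑ i ∈ range m, t i * (s' i - t i)
        = ∑ i ∈ range m, t i * s' i - ∑ i ∈ range m, t i ^ 2 := by
      rw [← Finset.sum_sub_distrib]
      apply Finset.sum_congr rfl
      intro i _; ring
    rw [this] at h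
    linarith
  -- Cauchy–Schwarz
  have hcs : (∑ i ∈ range m, t i * s' i) ^ 2
      ≤ (∑ i ∈ range m, t i ^ 2) * ∑ i ∈ range m, s' i ^ 2 :=
    Finset.sum_mul_sq_le_sq_mul_sq _ _ _
  set T := ∑ i ∈ range m, t i ^ 2 with hT
  set S := ∑ i ∈ range m, s' i ^ 2 with hS
  have hT0 : 0 ≤ T := Finset.sum_nonneg fun i _ => sq_nonneg _
  have hS0 : 0 ≤ S := Finset.sum_nonneg fun i _ => sq_nonneg _
  have hTS : T ≤ S := by
    rcases eq_or_lt_of_le hT0 with h | h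
    · linarith
    · have hP0 : 0 ≤ ∑ i ∈ range m, t i * s' i := le_trans hT0 habel
      have : T ^ 2 ≤ (∑ i ∈ range m, t i * s' i) ^ 2 := by
        apply pow_le_pow_left₀ hT0 habel
      nlinarith
  -- lower bound on T
  have hTlog : Real.log m / 144 ≤ T := by
    have step : ∀ i : ℕ, 1 / (144 * ((i:ℝ)+1)) ≤ t i ^ 2 := by
      intro i
      have h1 := htpos i
      have h2 : (0:ℝ) < Real.sqrt (i+1) := Real.sqrt_pos.2 (by positivity)
      have hb : (0:ℝ) < 1 / (12 * Real.sqrt (i+1)) := by positivity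
      have : (1 / (12 * Real.sqrt (i+1))) ^ 2 ≤ t i ^ 2 := by
        apply pow_le_pow_left₀ (le_of_lt hb) h1
      have hsq : Real.sqrt (i+1) ^ 2 = (i:ℝ)+1 := Real.sq_sqrt (by positivity)
      calc 1 / (144 * ((i:ℝ)+1)) = (1 / (12 * Real.sqrt (i+1))) ^ 2 := by
              rw [div_pow, mul_pow, hsq]; norm_num
        _ ≤ t i ^ 2 := this
    have hlogstep : ∀ i : ℕ, Real.log ((i:ℝ)+1+1) - Real.log ((i:ℝ)+1) ≤ 1 / ((i:ℝ)+1) := by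
      intro i
      have hpos1 : (0:ℝ) < (i:ℝ)+1 := by positivity
      have hpos2 : (0:ℝ) < (i:ℝ)+1+1 := by positivity
      rw [← Real.log_div (ne_of_gt hpos2) (ne_of_gt hpos1)]
      have := Real.log_le_sub_one_of_pos (show (0:ℝ) < ((i:ℝ)+1+1)/((i:ℝ)+1) by positivity)
      have heq : ((i:ℝ)+1+1)/((i:ℝ)+1) - 1 = 1 / ((i:ℝ)+1) := by field_simp; ring
      linarith
    have hharm : Real.log (m+1) ≤ ∑ i ∈ range m, 1 / ((i:ℝ)+1) := by
      have htel := Finset.sum_range_sub (fun j : ℕ => Real.log ((j:ℝ)+1)) m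
      simp only [Nat.cast_zero, zero_add, Real.log_one, sub_zero] at htel
      rw [← htel]
      apply Finset.sum_le_sum
      intro i _
      have := hlogstep i
      push_cast
      linarith
    have hmono : Real.log m ≤ Real.log ((m:ℝ)+1) := by
      rcases Nat.eq_zero_or_pos m with h | h
      · simp [h]
      · apply Real.log_le_log (by exact_mod_cast h) (by linarith)
    have hsum2 : ∑ i ∈ range m, 1 / (144 * ((i:ℝ)+1)) ≤ T :=
      Finset.sum_le_sum fun i _ => step i
    have heq2 : ∑ i ∈ range m, 1 / (144 * ((i:ℝ)+1))
        = (∑ i ∈ range m, 1 / ((i:ℝ)+1)) / 144 := by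
      rw [Finset.sum_div]
      apply Finset.sum_congr rfl
      intro i _
      field_simp
    rw [heq2] at hsum2
    linarith
  -- conclude
  have hfin : S = ∑ i, s i ^ 2 := by
    rw [hS, ← Fin.sum_univ_eq_sum_range (fun i => s' i ^ 2) m]
    apply Finset.sum_congr rfl
    intro i _
    simp [hs', i.isLt]
  rw [← hfin]
  calc (1/144 : ℝ) * Real.log m = Real.log m / 144 := by ring
    _ ≤ T := hTlog
    _ ≤ S := hTS
end

section
/- There is an absolute constant c' such that for every m ≥ 2, ∑_{n : (n+2)(n+1)/2 < m} (1/(2(n+1)))·(1 − (1/m)·binom(n+2,2))² ≥ (1/4)·log m − c'. -/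
lemma choose_two_cast (n : ℕ) : (((n + 2).choose 2 : ℕ) : ℝ) = ((n : ℝ) + 1) * ((n : ℝ) + 2) / 2 := by
  have he : Even ((n + 1) * (n + 2)) := Nat.even_mul_succ_self (n + 1)
  have h2 : (n + 2).choose 2 * 2 = (n + 2) * (n + 1) := by
    rw [Nat.choose_two_right]
    have : n + 2 - 1 = n + 1 := by omega
    rw [this]
    exact Nat.div_mul_cancel (by rw [mul_comm]; exact he.two_dvd)
  have := congrArg (fun k : ℕ => (k : ℝ)) h2
  push_cast at this
  linarith

/-- There is an absolute constant `c'` such that for all `m ≥ 2`,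
`∑_{n : binom(n+2,2) < m} (1/(2(n+1))) (1 - binom(n+2,2)/m)² ≥ (1/4) log m - c'`. -/
theorem stmt19 :
    ∃ c' : ℝ, ∀ m : ℕ, 2 ≤ m →
      (1 / 4) * Real.log m - c' ≤
        ∑ n ∈ (Finset.range m).filter (fun n => (n + 2).choose 2 < m),
          (1 / (2 * ((n : ℝ) + 1))) * (1 - (1 / (m : ℝ)) * ((n + 2).choose 2 : ℕ)) ^ 2 := by
  use 1
  intro m hm
  have hmc : m ≤ (m + 2).choose 2 := by
    rw [Nat.choose_two_right, show m + 2 - 1 = m + 1 from rfl]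
    have h1 : m * 2 ≤ (m + 2) * (m + 1) := by nlinarith
    exact Nat.le_div_iff_mul_le (by norm_num) |>.mpr h1
  have hex : ∃ k, m ≤ (k + 2).choose 2 := ⟨m, hmc⟩
  obtain ⟨N, hN, hlt⟩ : ∃ N, m ≤ (N + 2).choose 2 ∧ ∀ n < N, (n + 2).choose 2 < m :=
    ⟨Nat.find hex, Nat.find_spec hex, fun n hn => lt_of_not_ge (Nat.find_min hex hn)⟩
  have hNm : N ≤ m := by
    by_contra h
    push_neg at h
    exact absurd hmc (not_le.mpr (hlt m h))
  have hNpos : 0 < N := by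
    rcases Nat.eq_zero_or_pos N with h | h
    · subst h
      simp [Nat.choose_two_right] at hN
      omega
    · exact h
  have hset : (Finset.range m).filter (fun n => (n + 2).choose 2 < m) = Finset.range N := by
    ext n
    simp only [Finset.mem_filter, Finset.mem_range]
    constructor
    · rintro ⟨hnm, hc⟩
      by_contra h
      push_neg at h
      exact absurd (le_trans hN (Nat.choose_le_choose 2 (by omega))) (not_le.mpr hc)
    · intro hn
      exact ⟨lt_of_lt_of_le hn hNm, hlt n hn⟩
  rw [hset]
  have hmpos : (0 : ℝ) < m := by positivity
  -- termwise lower bound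
  have hterm : ∀ n ∈ Finset.range N,
      1 / (2 * ((n : ℝ) + 1)) - ((n : ℝ) + 2) / (2 * m) ≤
      (1 / (2 * ((n : ℝ) + 1))) * (1 - (1 / (m : ℝ)) * ((n + 2).choose 2 : ℕ)) ^ 2 := by
    intro n _
    have hp : (0 : ℝ) < (n : ℝ) + 1 := by positivity
    rw [choose_two_cast]
    set x : ℝ := (1 / (m : ℝ)) * (((n : ℝ) + 1) * ((n : ℝ) + 2) / 2) with hx
    have key : (1 : ℝ) - 2 * x ≤ (1 - x) ^ 2 := by nlinarith [sq_nonneg x]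
    have heq : 1 / (2 * ((n : ℝ) + 1)) - ((n : ℝ) + 2) / (2 * m) =
        (1 / (2 * ((n : ℝ) + 1))) * (1 - 2 * x) := by
      rw [hx]; field_simp
    rw [heq]
    exact mul_le_mul_of_nonneg_left key (by positivity)
  have hsum := Finset.sum_le_sum hterm
  rw [Finset.sum_sub_distrib] at hsum
  -- harmonic lower bound
  have hlog : Real.log ((N : ℝ) + 1) ≤ ∑ n ∈ Finset.range N, 1 / ((n : ℝ) + 1) := by
    have htel := Finset.sum_range_sub (fun i : ℕ => Real.log ((i : ℝ) + 1)) N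
    have hsum2 : ∑ n ∈ Finset.range N, (Real.log ((n : ℝ) + 2) - Real.log ((n : ℝ) + 1)) =
        Real.log ((N : ℝ) + 1) := by
      have e1 : ∑ n ∈ Finset.range N, (Real.log ((n : ℝ) + 2) - Real.log ((n : ℝ) + 1)) =
          ∑ i ∈ Finset.range N, (Real.log (((i + 1 : ℕ) : ℝ) + 1) - Real.log ((i : ℝ) + 1)) := by
        apply Finset.sum_congr rfl
        intro i _
        push_cast
        rw [show ((i : ℝ) + 1 + 1) = (i : ℝ) + 2 from by ring]
      rw [e1, htel]
      norm_num
    have hstep : ∀ n ∈ Finset.range N,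
        Real.log ((n : ℝ) + 2) - Real.log ((n : ℝ) + 1) ≤ 1 / ((n : ℝ) + 1) := by
      intro n _
      have hp : (0 : ℝ) < (n : ℝ) + 1 := by positivity
      have hq : (0 : ℝ) < (n : ℝ) + 2 := by positivity
      rw [← Real.log_div (by positivity) (by positivity)]
      have := Real.log_le_sub_one_of_pos (show (0:ℝ) < ((n : ℝ) + 2) / ((n : ℝ) + 1) by positivity)
      have heq2 : ((n : ℝ) + 2) / ((n : ℝ) + 1) - 1 = 1 / ((n : ℝ) + 1) := by
        field_simp
        norm_num
      linarith
    calc Real.log ((N : ℝ) + 1)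
        = ∑ n ∈ Finset.range N, (Real.log ((n : ℝ) + 2) - Real.log ((n : ℝ) + 1)) := hsum2.symm
      _ ≤ ∑ n ∈ Finset.range N, 1 / ((n : ℝ) + 1) := Finset.sum_le_sum hstep
  have hA : (1 / 2) * Real.log ((N : ℝ) + 1) ≤ ∑ n ∈ Finset.range N, 1 / (2 * ((n : ℝ) + 1)) := by
    have : ∑ n ∈ Finset.range N, 1 / (2 * ((n : ℝ) + 1)) =
        (1 / 2) * ∑ n ∈ Finset.range N, 1 / ((n : ℝ) + 1) := by
      rw [Finset.mul_sum]
      apply Finset.sum_congr rfl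
      intro n _
      field_simp
    rw [this]
    linarith
  -- error sum upper bound
  obtain ⟨K, rfl⟩ : ∃ K, N = K + 1 := ⟨N - 1, by omega⟩
  have hK : (K + 2).choose 2 < m := hlt K (by omega)
  have hKr : ((K : ℝ) + 1) * ((K : ℝ) + 2) / 2 < m := by
    rw [← choose_two_cast]
    exact_mod_cast hK
  have hNmr : (K : ℝ) + 1 ≤ m := by exact_mod_cast hNm
  have hB : ∑ n ∈ Finset.range (K + 1), ((n : ℝ) + 2) / (2 * m) ≤ 1 := by
    have hgauss : ∑ n ∈ Finset.range (K + 1), ((n : ℝ) + 2) =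
        ((K : ℝ) + 1) * (K : ℝ) / 2 + 2 * ((K : ℝ) + 1) := by
      have h := Finset.sum_range_id_mul_two (K + 1)
      have h' := congrArg (fun k : ℕ => (k : ℝ)) h
      push_cast at h'
      rw [Finset.sum_add_distrib, Finset.sum_const, Finset.card_range]
      simp only [nsmul_eq_mul]
      push_cast
      linarith
    have : ∑ n ∈ Finset.range (K + 1), ((n : ℝ) + 2) / (2 * m) =
        (∑ n ∈ Finset.range (K + 1), ((n : ℝ) + 2)) / (2 * m) := by
      rw [Finset.sum_div]
    rw [this, hgauss, div_le_one (by positivity)]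
    nlinarith
  -- combine
  have hmN : (m : ℝ) ≤ ((K : ℝ) + 2) ^ 2 := by
    have h1 : (m : ℝ) ≤ (((K + 1 + 2).choose 2 : ℕ) : ℝ) := by exact_mod_cast hN
    rw [choose_two_cast] at h1
    push_cast at h1
    nlinarith
  have hlogm : Real.log m ≤ 2 * Real.log ((K : ℝ) + 2) := by
    have := Real.log_le_log hmpos hmN
    rwa [Real.log_pow, Nat.cast_ofNat] at this
  have hA' : (1 / 2) * Real.log ((K : ℝ) + 2) ≤
      ∑ n ∈ Finset.range (K + 1), 1 / (2 * ((n : ℝ) + 1)) := by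
    have : ((K + 1 : ℕ) : ℝ) + 1 = (K : ℝ) + 2 := by push_cast; ring
    rw [← this]
    exact hA
  linarith
end
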